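/- arXiv:2504.00826 — 12 statements merged into one kernel-verified Lean document; each statement's English description precedes it below -/
import Mathlib

section
/- Let X be a real Banach space of dimension at least 2. Then for every t ∈ [0, 1/2), one has 2t² − 2t + 1 ≤ L_X(t) ≤ 2t² − 4t + 2. -/
/-- The geometric constant `L_X(t)` defined via isosceles orthogonality. -/
noncomputable def LX (X : Type*) [NormedAddCommGroup X] [NormedSpace ℝ X] (t : ℝ) : ℝ :=
  sSup {r : ℝ | ∃ x y : X, (x, y) ≠ (0, 0) ∧ ‖x + y‖ = ‖x - y‖ ∧
    r = (‖t • x + (1 - t) • y‖ ^ 2 + ‖(1 - t) • x + t • y‖ ^ 2) / ‖x + y‖ ^ 2}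

theorem stmt_0 (X : Type*) [NormedAddCommGroup X] [NormedSpace ℝ X] [CompleteSpace X]
    (hdim : 2 ≤ Module.rank ℝ X) (t : ℝ) (ht : t ∈ Set.Ico (0 : ℝ) (1 / 2)) :
    2 * t ^ 2 - 2 * t + 1 ≤ LX X t ∧ LX X t ≤ 2 * t ^ 2 - 4 * t + 2 := by
  obtain ⟨ht0, ht1⟩ := ht
  have h12 : (0:ℝ) ≤ 1 - 2*t := by linarith
  have hnt : Nontrivial X := by
    rw [← rank_pos_iff_nontrivial (R := ℝ)]
    exact lt_of_lt_of_le (by norm_num) hdim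
  set S := {r : ℝ | ∃ x y : X, (x, y) ≠ (0, 0) ∧ ‖x + y‖ = ‖x - y‖ ∧
    r = (‖t • x + (1 - t) • y‖ ^ 2 + ‖(1 - t) • x + t • y‖ ^ 2) / ‖x + y‖ ^ 2} with hS
  have key : ∀ r ∈ S, r ≤ 2 * t ^ 2 - 4 * t + 2 := by
    rintro r ⟨x, y, hne, hI, rfl⟩
    have hxy : x + y ≠ 0 := by
      intro h
      apply hne
      have h2 : ‖x - y‖ = 0 := by rw [← hI, h, norm_zero]
      have h3 : x = y := by
        rwa [norm_eq_zero, sub_eq_zero] at h2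
      have h4 : y + y = 0 := by rw [← h3] at h ⊢; exact h
      have h5 : y = 0 := by
        have h6 : (2:ℝ) • y = 0 := by rw [two_smul]; exact h4
        simpa using h6
      simp [h3, h5]
    have hc : 0 < ‖x + y‖ := norm_pos_iff.mpr hxy
    have e1 : t • x + (1 - t) • y = (1/2 : ℝ) • (x + y) - ((1 - 2*t)/2 : ℝ) • (x - y) := by
      module
    have e2 : (1 - t) • x + t • y = (1/2 : ℝ) • (x + y) + ((1 - 2*t)/2 : ℝ) • (x - y) := by
      module
    have habs : |(1 - 2*t)/2| = (1 - 2*t)/2 := abs_of_nonneg (by linarith)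
    have n1 : ‖t • x + (1 - t) • y‖ ≤ (1 - t) * ‖x + y‖ := by
      rw [e1]
      calc ‖(1/2 : ℝ) • (x + y) - ((1 - 2*t)/2 : ℝ) • (x - y)‖
          ≤ ‖(1/2 : ℝ) • (x + y)‖ + ‖((1 - 2*t)/2 : ℝ) • (x - y)‖ := norm_sub_le _ _
        _ = (1/2) * ‖x + y‖ + ((1 - 2*t)/2) * ‖x - y‖ := by
            rw [norm_smul, norm_smul, Real.norm_eq_abs, Real.norm_eq_abs, habs,
              abs_of_nonneg (by norm_num : (0:ℝ) ≤ 1/2)]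
        _ = (1 - t) * ‖x + y‖ := by rw [← hI]; ring
    have n2 : ‖(1 - t) • x + t • y‖ ≤ (1 - t) * ‖x + y‖ := by
      rw [e2]
      calc ‖(1/2 : ℝ) • (x + y) + ((1 - 2*t)/2 : ℝ) • (x - y)‖
          ≤ ‖(1/2 : ℝ) • (x + y)‖ + ‖((1 - 2*t)/2 : ℝ) • (x - y)‖ := norm_add_le _ _
        _ = (1/2) * ‖x + y‖ + ((1 - 2*t)/2) * ‖x - y‖ := by
            rw [norm_smul, norm_smul, Real.norm_eq_abs, Real.norm_eq_abs, habs,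
              abs_of_nonneg (by norm_num : (0:ℝ) ≤ 1/2)]
        _ = (1 - t) * ‖x + y‖ := by rw [← hI]; ring
    have s1 : ‖t • x + (1 - t) • y‖ ^ 2 ≤ ((1 - t) * ‖x + y‖) ^ 2 :=
      pow_le_pow_left₀ (norm_nonneg _) n1 2
    have s2 : ‖(1 - t) • x + t • y‖ ^ 2 ≤ ((1 - t) * ‖x + y‖) ^ 2 :=
      pow_le_pow_left₀ (norm_nonneg _) n2 2
    rw [div_le_iff₀ (by positivity)]
    nlinarith [sq_nonneg ‖x + y‖]
  obtain ⟨x, hx⟩ := exists_ne (0 : X)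
  have hxn : (0:ℝ) < ‖x‖ := norm_pos_iff.mpr hx
  have hmem : (2 * t ^ 2 - 2 * t + 1 : ℝ) ∈ S := by
    refine ⟨x, 0, by simp [hx], by simp, ?_⟩
    rw [smul_zero, smul_zero, add_zero, add_zero, add_zero, norm_smul, norm_smul,
      Real.norm_eq_abs, Real.norm_eq_abs, abs_of_nonneg ht0, abs_of_nonneg (by linarith : (0:ℝ) ≤ 1 - t)]
    field_simp
    ring
  have hbdd : BddAbove S := ⟨2 * t ^ 2 - 4 * t + 2, key⟩
  constructor
  · exact le_csSup hbdd hmem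
  · exact csSup_le ⟨_, hmem⟩ key
end

section
/- Let X = ℝ² equipped with the ℓ¹ norm ‖(a, b)‖ = |a| + |b|. Then for every t ∈ [0, 1/2), L_X(t) = 2t² − 4t + 2. -/
lemma aux_bound {X : Type*} [NormedAddCommGroup X] [NormedSpace ℝ X] (t : ℝ)
    (ht0 : 0 ≤ t) (ht1 : t < 1/2) (x y : X) (h : ‖x + y‖ = ‖x - y‖) :
    ‖t • x + (1 - t) • y‖ ≤ (1 - t) * ‖x + y‖ := by
  have hxy : t • x + (1 - t) • y = (2⁻¹ : ℝ) • (x + y) + ((1 - 2*t)/2) • (y - x) := by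
    module
  rw [hxy]
  calc ‖(2⁻¹ : ℝ) • (x + y) + ((1 - 2*t)/2) • (y - x)‖
      ≤ ‖(2⁻¹ : ℝ) • (x + y)‖ + ‖((1 - 2*t)/2) • (y - x)‖ := norm_add_le _ _
    _ = 2⁻¹ * ‖x + y‖ + (1 - 2*t)/2 * ‖y - x‖ := by
        rw [norm_smul, norm_smul, Real.norm_eq_abs, Real.norm_eq_abs,
          abs_of_nonneg (by norm_num), abs_of_nonneg (by linarith)]
    _ = (1 - t) * ‖x + y‖ := by rw [norm_sub_rev, ← h]; ring

theorem stmt_1 (t : ℝ) (ht : t ∈ Set.Ico (0 : ℝ) (1 / 2)) :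
    LX (PiLp 1 (fun _ : Fin 2 => ℝ)) t = 2 * t ^ 2 - 4 * t + 2 := by
  obtain ⟨ht0, ht1⟩ := ht
  have hnorm : ∀ a b : ℝ,
      ‖((WithLp.equiv 1 (Fin 2 → ℝ)).symm ![a,b] : PiLp 1 (fun _ : Fin 2 => ℝ))‖ = |a| + |b| := by
    intro a b
    rw [PiLp.norm_eq_sum (by norm_num)]
    simp [Fin.sum_univ_two]
  apply IsGreatest.csSup_eq
  constructor
  · -- membership
    refine ⟨(WithLp.equiv 1 (Fin 2 → ℝ)).symm ![1,1], (WithLp.equiv 1 (Fin 2 → ℝ)).symm ![1,-1],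
      ?_, ?_, ?_⟩
    · simp only [ne_eq, Prod.mk.injEq, not_and]
      intro hx
      exfalso
      have := congrFun (congrArg (WithLp.equiv 1 (Fin 2 → ℝ)) hx) 0
      simp at this
    · have h1 : ((WithLp.equiv 1 (Fin 2 → ℝ)).symm ![1,1] : PiLp 1 (fun _ : Fin 2 => ℝ)) +
          (WithLp.equiv 1 (Fin 2 → ℝ)).symm ![1,-1]
          = (WithLp.equiv 1 (Fin 2 → ℝ)).symm ![2,0] := by
        ext i; fin_cases i <;> simp <;> norm_num
      have h2 : ((WithLp.equiv 1 (Fin 2 → ℝ)).symm ![1,1] : PiLp 1 (fun _ : Fin 2 => ℝ)) -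
          (WithLp.equiv 1 (Fin 2 → ℝ)).symm ![1,-1]
          = (WithLp.equiv 1 (Fin 2 → ℝ)).symm ![0,2] := by
        ext i; fin_cases i <;> simp <;> norm_num
      rw [h1, h2, hnorm, hnorm]; norm_num
    · have h1 : t • ((WithLp.equiv 1 (Fin 2 → ℝ)).symm ![1,1] : PiLp 1 (fun _ : Fin 2 => ℝ)) +
          (1 - t) • (WithLp.equiv 1 (Fin 2 → ℝ)).symm ![1,-1]
          = (WithLp.equiv 1 (Fin 2 → ℝ)).symm ![1, 2*t - 1] := by
        ext i; fin_cases i <;> simp <;> ring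
      have h2 : (1 - t) • ((WithLp.equiv 1 (Fin 2 → ℝ)).symm ![1,1] : PiLp 1 (fun _ : Fin 2 => ℝ)) +
          t • (WithLp.equiv 1 (Fin 2 → ℝ)).symm ![1,-1]
          = (WithLp.equiv 1 (Fin 2 → ℝ)).symm ![1, 1 - 2*t] := by
        ext i; fin_cases i <;> simp <;> ring
      have h3 : ((WithLp.equiv 1 (Fin 2 → ℝ)).symm ![1,1] : PiLp 1 (fun _ : Fin 2 => ℝ)) +
          (WithLp.equiv 1 (Fin 2 → ℝ)).symm ![1,-1]
          = (WithLp.equiv 1 (Fin 2 → ℝ)).symm ![2,0] := by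
        ext i; fin_cases i <;> simp <;> norm_num
      rw [h1, h2, h3, hnorm, hnorm, hnorm]
      rw [abs_of_nonpos (show 2*t - 1 ≤ 0 by linarith), abs_of_nonneg (show (0:ℝ) ≤ 1 - 2*t by linarith)]
      norm_num
      ring
  · -- upper bound
    rintro r ⟨x, y, hxy0, hiso, rfl⟩
    have hxy : x + y ≠ 0 := by
      intro h0
      have : ‖x - y‖ = 0 := by rw [← hiso, h0, norm_zero]
      have hx : x = y := by rwa [norm_eq_zero, sub_eq_zero] at this
      apply hxy0
      have : x = 0 := by
        have : x + x = 0 := by rw [hx] at h0 ⊢; exact h0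
        have := congrArg (fun z => (2⁻¹ : ℝ) • z) this
        simpa [smul_add, ← two_smul ℝ x, smul_smul] using this
      simp [Prod.ext_iff, this, ← hx, this]
    have hd : (0:ℝ) < ‖x + y‖ := norm_pos_iff.mpr hxy
    have b1 : ‖t • x + (1 - t) • y‖ ≤ (1 - t) * ‖x + y‖ := aux_bound t ht0 ht1 x y hiso
    have b2 : ‖(1 - t) • x + t • y‖ ≤ (1 - t) * ‖x + y‖ := by
      have hiso' : ‖y + x‖ = ‖y - x‖ := by rw [add_comm, norm_sub_rev]; exact hiso
      have := aux_bound t ht0 ht1 y x hiso'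
      rw [add_comm y x] at this
      rw [add_comm ((1-t) • x)]
      exact this
    rw [div_le_iff₀ (pow_pos hd 2)]
    have h1t : (0:ℝ) ≤ (1 - t) * ‖x + y‖ := mul_nonneg (by linarith) (norm_nonneg _)
    nlinarith [norm_nonneg (t • x + (1 - t) • y), norm_nonneg ((1 - t) • x + t • y)]
end

section
/- Let X = ℝ² equipped with the ℓ∞ norm ‖(a, b)‖ = max(|a|, |b|). Then for every t ∈ [0, 1/2), L_X(t) = 2t² − 4t + 2. -/
lemma norm_linf2 (f : PiLp ⊤ (fun _ : Fin 2 => ℝ)) : ‖f‖ = max |f 0| |f 1| := by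
  rw [PiLp.norm_eq_ciSup]
  have h : ∀ i : Fin 2, ‖f i‖ = |f i| := fun i => rfl
  apply le_antisymm
  · exact ciSup_le (fun i => by fin_cases i <;> simp [h, le_max_left, le_max_right])
  · apply max_le
    · exact le_ciSup (f := fun i => ‖f i‖) (Set.finite_range _).bddAbove 0
    · exact le_ciSup (f := fun i => ‖f i‖) (Set.finite_range _).bddAbove 1

noncomputable def mk2 (a b : ℝ) : PiLp ⊤ (fun _ : Fin 2 => ℝ) :=
  (WithLp.equiv ⊤ _).symm ![a, b]

lemma norm_mk2 (a b : ℝ) : ‖mk2 a b‖ = max |a| |b| := by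
  rw [norm_linf2]; rfl

lemma mk2_add (a b c d : ℝ) : mk2 a b + mk2 c d = mk2 (a + c) (b + d) := by
  ext i; fin_cases i <;> rfl

lemma mk2_sub (a b c d : ℝ) : mk2 a b - mk2 c d = mk2 (a - c) (b - d) := by
  ext i; fin_cases i <;> rfl

lemma mk2_smul (r a b : ℝ) : r • mk2 a b = mk2 (r * a) (r * b) := by
  ext i; fin_cases i <;> rfl

lemma mk2_zero : mk2 0 0 = 0 := by
  ext i; fin_cases i <;> rfl

lemma key_ub {X : Type*} [NormedAddCommGroup X] [NormedSpace ℝ X] {t : ℝ}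
    (ht1 : t < 1/2) (x y : X) (hiso : ‖x + y‖ = ‖x - y‖) :
    ‖t • x + (1 - t) • y‖ ≤ (1 - t) * ‖x + y‖ := by
  have hxy : t • x + (1 - t) • y = (1/2 : ℝ) • (x + y) + (1/2 - t) • (y - x) := by
    module
  calc ‖t • x + (1 - t) • y‖ ≤ ‖(1/2 : ℝ) • (x + y)‖ + ‖(1/2 - t) • (y - x)‖ := by
        rw [hxy]; exact norm_add_le _ _
    _ = (1/2) * ‖x + y‖ + (1/2 - t) * ‖y - x‖ := by
        rw [norm_smul, norm_smul, Real.norm_eq_abs, Real.norm_eq_abs,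
          abs_of_nonneg (by norm_num : (0:ℝ) ≤ 1/2), abs_of_nonneg (by linarith)]
    _ = (1 - t) * ‖x + y‖ := by
        rw [norm_sub_rev, ← hiso]; ring

theorem stmt_2 (t : ℝ) (ht : t ∈ Set.Ico (0 : ℝ) (1 / 2)) :
    LX (PiLp ⊤ (fun _ : Fin 2 => ℝ)) t = 2 * t ^ 2 - 4 * t + 2 := by
  obtain ⟨ht0, ht1⟩ := ht
  set X := PiLp ⊤ (fun _ : Fin 2 => ℝ)
  have hub : ∀ r ∈ {r : ℝ | ∃ x y : X, (x, y) ≠ (0, 0) ∧ ‖x + y‖ = ‖x - y‖ ∧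
      r = (‖t • x + (1 - t) • y‖ ^ 2 + ‖(1 - t) • x + t • y‖ ^ 2) / ‖x + y‖ ^ 2},
      r ≤ 2 * t ^ 2 - 4 * t + 2 := by
    rintro r ⟨x, y, hne, hiso, rfl⟩
    have hc : (0:ℝ) < ‖x + y‖ := by
      rcases eq_or_ne (x + y) 0 with h | h
      · exfalso
        have h2 : ‖x - y‖ = 0 := by rw [← hiso, h, norm_zero]
        have hxy : x = y := sub_eq_zero.mp (norm_eq_zero.mp h2)
        have h2x : (2:ℝ) • x = 0 := by
          rw [two_smul]; rw [hxy] at h ⊢; exact h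
        have hx0 : x = 0 := by
          rcases smul_eq_zero.mp h2x with h' | h'
          · norm_num at h'
          · exact h'
        exact hne (by simp [hx0, hxy ▸ hx0])
      · exact norm_pos_iff.mpr h
    have h1 : ‖t • x + (1 - t) • y‖ ≤ (1 - t) * ‖x + y‖ := key_ub ht1 x y hiso
    have h2 : ‖(1 - t) • x + t • y‖ ≤ (1 - t) * ‖x + y‖ := by
      have h' := key_ub ht1 y x (by rw [add_comm, norm_sub_rev]; exact hiso)
      rwa [add_comm (t • y), add_comm y x] at h'
    rw [div_le_iff₀ (by positivity)]
    nlinarith [norm_nonneg (t • x + (1 - t) • y), norm_nonneg ((1 - t) • x + t • y),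
      norm_nonneg (x + y)]
  have hmem : (2 * t ^ 2 - 4 * t + 2) ∈ {r : ℝ | ∃ x y : X, (x, y) ≠ (0, 0) ∧ ‖x + y‖ = ‖x - y‖ ∧
      r = (‖t • x + (1 - t) • y‖ ^ 2 + ‖(1 - t) • x + t • y‖ ^ 2) / ‖x + y‖ ^ 2} := by
    refine ⟨mk2 1 0, mk2 0 1, ?_, ?_, ?_⟩
    · intro h
      have hx : mk2 1 0 = (0 : X) := congrArg Prod.fst h
      have := congrArg norm hx
      rw [norm_mk2, norm_zero] at this
      norm_num at this
    · rw [mk2_add, mk2_sub, norm_mk2, norm_mk2]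
      norm_num
    · rw [mk2_smul, mk2_smul, mk2_smul, mk2_smul, mk2_add, mk2_add, mk2_add,
        norm_mk2, norm_mk2, norm_mk2]
      have e : |t * 1 + (1 - t) * 0| = t := by rw [abs_of_nonneg] <;> linarith
      have e2 : |t * 0 + (1 - t) * 1| = 1 - t := by rw [abs_of_nonneg] <;> linarith
      have e3 : |(1 - t) * 1 + t * 0| = 1 - t := by rw [abs_of_nonneg] <;> linarith
      have e4 : |(1 - t) * 0 + t * 1| = t := by rw [abs_of_nonneg] <;> linarith
      rw [e, e2, e3, e4, max_eq_right (by linarith), max_eq_left (by linarith)]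
      norm_num
      ring
  unfold LX
  exact le_antisymm (csSup_le ⟨_, hmem⟩ hub) (le_csSup ⟨_, hub⟩ hmem)
end

section
/- Let a < b be real numbers and let X = C([a, b], ℝ) be the Banach space of continuous real-valued functions on [a, b] with the supremum norm ‖x‖ = sup_{m ∈ [a,b]} |x(m)|. Then for every t ∈ [0, 1/2), L_X(t) = 2t² − 4t + 2. -/
private lemma LX_aux {X : Type*} [NormedAddCommGroup X] [NormedSpace ℝ X]
    (t : ℝ) (ht0 : 0 ≤ t) (ht2 : t < 1/2) (x y : X) (hxy0 : (x, y) ≠ (0, 0))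
    (hI : ‖x + y‖ = ‖x - y‖) :
    (‖t • x + (1 - t) • y‖ ^ 2 + ‖(1 - t) • x + t • y‖ ^ 2) / ‖x + y‖ ^ 2
      ≤ 2 * t ^ 2 - 4 * t + 2 := by
    have hxy : x + y ≠ 0 := by
      intro h
      have h2 : x - y = 0 := norm_eq_zero.mp (by rw [← hI, h, norm_zero])
      apply hxy0
      have hx : x = 0 := by
        have hx2 : x = (2⁻¹:ℝ) • ((x + y) + (x - y)) := by module
        rw [h, h2, add_zero, smul_zero] at hx2; exact hx2
      have hy : y = 0 := by
        have hy2 : y = (2⁻¹:ℝ) • ((x + y) - (x - y)) := by module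
        rw [h, h2, sub_zero, smul_zero] at hy2; exact hy2
      rw [hx, hy]
    have hu : (0:ℝ) < ‖x + y‖ := norm_pos_iff.mpr hxy
    have hA : ‖t • x + (1 - t) • y‖ ≤ (1 - t) * ‖x + y‖ := by
      have heq : t • x + (1 - t) • y = (2⁻¹:ℝ) • (x + y) + ((2*t-1)/2) • (x - y) := by module
      have h1 : ‖(2⁻¹:ℝ) • (x + y)‖ = 2⁻¹ * ‖x + y‖ := by
        rw [norm_smul]; norm_num
      have h2 : ‖((2*t-1)/2) • (x - y)‖ = ((1-2*t)/2) * ‖x + y‖ := by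
        rw [norm_smul, ← hI, Real.norm_eq_abs, abs_of_nonpos (by linarith : (2*t-1)/2 ≤ 0)]
        ring
      have h3 : 2⁻¹ * ‖x + y‖ + ((1-2*t)/2) * ‖x + y‖ = (1 - t) * ‖x + y‖ := by ring
      calc ‖t • x + (1 - t) • y‖ = ‖(2⁻¹:ℝ) • (x + y) + ((2*t-1)/2) • (x - y)‖ := by rw [heq]
        _ ≤ ‖(2⁻¹:ℝ) • (x + y)‖ + ‖((2*t-1)/2) • (x - y)‖ := norm_add_le _ _
        _ ≤ (1 - t) * ‖x + y‖ := by rw [h1, h2, h3]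
    have hB : ‖(1 - t) • x + t • y‖ ≤ (1 - t) * ‖x + y‖ := by
      have heq : (1 - t) • x + t • y = (2⁻¹:ℝ) • (x + y) + ((1-2*t)/2) • (x - y) := by module
      have h1 : ‖(2⁻¹:ℝ) • (x + y)‖ = 2⁻¹ * ‖x + y‖ := by
        rw [norm_smul]; norm_num
      have h2 : ‖((1-2*t)/2) • (x - y)‖ = ((1-2*t)/2) * ‖x + y‖ := by
        rw [norm_smul, ← hI, Real.norm_eq_abs, abs_of_nonneg (by linarith : (0:ℝ) ≤ (1-2*t)/2)]
      have h3 : 2⁻¹ * ‖x + y‖ + ((1-2*t)/2) * ‖x + y‖ = (1 - t) * ‖x + y‖ := by ring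
      calc ‖(1 - t) • x + t • y‖ = ‖(2⁻¹:ℝ) • (x + y) + ((1-2*t)/2) • (x - y)‖ := by rw [heq]
        _ ≤ ‖(2⁻¹:ℝ) • (x + y)‖ + ‖((1-2*t)/2) • (x - y)‖ := norm_add_le _ _
        _ ≤ (1 - t) * ‖x + y‖ := by rw [h1, h2, h3]
    rw [div_le_iff₀ (by positivity)]
    nlinarith [norm_nonneg (t • x + (1 - t) • y), norm_nonneg ((1 - t) • x + t • y),
      sq_nonneg (1 - t), hu.le, hA, hB]

theorem stmt_3 (a b : ℝ) (hab : a < b) (t : ℝ) (ht : t ∈ Set.Ico (0 : ℝ) (1 / 2)) :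
    LX C(Set.Icc a b, ℝ) t = 2 * t ^ 2 - 4 * t + 2 := by
  obtain ⟨ht0, ht2⟩ := ht
  have ht2' : t < 1/2 := ht2
  have hba : (0:ℝ) < b - a := sub_pos.mpr hab
  -- upper bound
  have hub : ∀ r ∈ {r : ℝ | ∃ x y : C(Set.Icc a b, ℝ), (x, y) ≠ (0, 0) ∧ ‖x + y‖ = ‖x - y‖ ∧
      r = (‖t • x + (1 - t) • y‖ ^ 2 + ‖(1 - t) • x + t • y‖ ^ 2) / ‖x + y‖ ^ 2},
      r ≤ 2 * t ^ 2 - 4 * t + 2 := by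
    rintro r ⟨x, y, hxy0, hI, rfl⟩
    exact LX_aux t ht0 (by linarith) x y hxy0 hI
  -- witnesses
  have hcx : Continuous fun m : Set.Icc a b => (b - (m:ℝ)) / (b - a) :=
    (continuous_const.sub continuous_subtype_val).div_const _
  have hcy : Continuous fun m : Set.Icc a b => ((m:ℝ) - a) / (b - a) :=
    (continuous_subtype_val.sub continuous_const).div_const _
  set x : C(Set.Icc a b, ℝ) := ⟨_, hcx⟩ with hxdef
  set y : C(Set.Icc a b, ℝ) := ⟨_, hcy⟩ with hydef
  -- helper for norms
  have normeq : ∀ (f : C(Set.Icc a b, ℝ)) (c : ℝ), 0 ≤ c → (∀ m, |f m| ≤ c) →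
      (∃ m, |f m| = c) → ‖f‖ = c := by
    rintro f c hc hle ⟨m, hm⟩
    refine le_antisymm ((ContinuousMap.norm_le f hc).mpr fun m => by
      simpa [Real.norm_eq_abs] using hle m) ?_
    calc c = ‖f m‖ := by simp [Real.norm_eq_abs, hm]
      _ ≤ ‖f‖ := f.norm_coe_le_norm m
  have hsum : ‖x + y‖ = 1 := by
    apply normeq _ _ zero_le_one
    · intro m
      have : (x + y) m = 1 := by
        simp only [ContinuousMap.add_apply, hxdef, hydef, ContinuousMap.coe_mk]
        field_simp; ring
      rw [this]; norm_num
    · refine ⟨⟨a, le_refl a, hab.le⟩, ?_⟩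
      simp only [ContinuousMap.add_apply, hxdef, hydef, ContinuousMap.coe_mk]
      have : (b - a) / (b - a) + (a - a) / (b - a) = 1 := by field_simp; ring
      rw [this, abs_one]
  have hdiff : ‖x - y‖ = 1 := by
    apply normeq _ _ zero_le_one
    · intro m
      obtain ⟨m, hm1, hm2⟩ := m
      simp only [ContinuousMap.sub_apply, hxdef, hydef, ContinuousMap.coe_mk]
      rw [div_sub_div_same, abs_div, abs_of_pos hba, div_le_one hba, abs_le]
      constructor <;> linarith
    · refine ⟨⟨a, le_refl a, hab.le⟩, ?_⟩
      simp only [ContinuousMap.sub_apply, hxdef, hydef, ContinuousMap.coe_mk]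
      have : (b - a) / (b - a) - (a - a) / (b - a) = 1 := by field_simp; ring
      rw [this, abs_one]
  have hA : ‖t • x + (1 - t) • y‖ = 1 - t := by
    apply normeq _ _ (by linarith)
    · intro m
      obtain ⟨m, hm1, hm2⟩ := m
      simp only [ContinuousMap.add_apply, ContinuousMap.smul_apply, hxdef, hydef,
        ContinuousMap.coe_mk, smul_eq_mul]
      have hv : t * ((b - m) / (b - a)) + (1 - t) * ((m - a) / (b - a))
          = (t * (b - m) + (1 - t) * (m - a)) / (b - a) := by ring
      rw [hv, abs_div, abs_of_pos hba, div_le_iff₀ hba, abs_le]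
      constructor <;>
        nlinarith [mul_nonneg ht0 (by linarith : (0:ℝ) ≤ b - m),
          mul_nonneg (by linarith : (0:ℝ) ≤ 1 - t) (by linarith : (0:ℝ) ≤ m - a),
          mul_nonneg (by linarith : (0:ℝ) ≤ 1 - 2*t) (by linarith : (0:ℝ) ≤ b - m)]
    · refine ⟨⟨b, hab.le, le_refl b⟩, ?_⟩
      simp only [ContinuousMap.add_apply, ContinuousMap.smul_apply, hxdef, hydef,
        ContinuousMap.coe_mk, smul_eq_mul]
      have : t * ((b - b) / (b - a)) + (1 - t) * ((b - a) / (b - a)) = 1 - t := by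
        field_simp; ring
      rw [this, abs_of_nonneg (by linarith)]
  have hB : ‖(1 - t) • x + t • y‖ = 1 - t := by
    apply normeq _ _ (by linarith)
    · intro m
      obtain ⟨m, hm1, hm2⟩ := m
      simp only [ContinuousMap.add_apply, ContinuousMap.smul_apply, hxdef, hydef,
        ContinuousMap.coe_mk, smul_eq_mul]
      have hv : (1 - t) * ((b - m) / (b - a)) + t * ((m - a) / (b - a))
          = ((1 - t) * (b - m) + t * (m - a)) / (b - a) := by ring
      rw [hv, abs_div, abs_of_pos hba, div_le_iff₀ hba, abs_le]
      constructor <;>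
        nlinarith [mul_nonneg ht0 (by linarith : (0:ℝ) ≤ m - a),
          mul_nonneg (by linarith : (0:ℝ) ≤ 1 - t) (by linarith : (0:ℝ) ≤ b - m),
          mul_nonneg (by linarith : (0:ℝ) ≤ 1 - 2*t) (by linarith : (0:ℝ) ≤ m - a)]
    · refine ⟨⟨a, le_refl a, hab.le⟩, ?_⟩
      simp only [ContinuousMap.add_apply, ContinuousMap.smul_apply, hxdef, hydef,
        ContinuousMap.coe_mk, smul_eq_mul]
      have : (1 - t) * ((b - a) / (b - a)) + t * ((a - a) / (b - a)) = 1 - t := by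
        field_simp; ring
      rw [this, abs_of_nonneg (by linarith)]
  have hxne : x ≠ 0 := by
    intro h
    have h1 : x ⟨a, le_refl a, hab.le⟩ = 0 := by rw [h]; rfl
    simp only [hxdef, ContinuousMap.coe_mk] at h1
    rw [div_eq_zero_iff] at h1
    rcases h1 with h1 | h1 <;> linarith
  have hmem : (2 * t ^ 2 - 4 * t + 2) ∈ {r : ℝ | ∃ x y : C(Set.Icc a b, ℝ),
      (x, y) ≠ (0, 0) ∧ ‖x + y‖ = ‖x - y‖ ∧
      r = (‖t • x + (1 - t) • y‖ ^ 2 + ‖(1 - t) • x + t • y‖ ^ 2) / ‖x + y‖ ^ 2} := by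
    refine ⟨x, y, ?_, by rw [hsum, hdiff], ?_⟩
    · intro h
      exact hxne (congrArg Prod.fst h)
    · rw [hsum, hA, hB]; ring
  rw [LX]
  exact le_antisymm (csSup_le ⟨_, hmem⟩ hub) (le_csSup ⟨_, hub⟩ hmem)
end

section
/- Let X be a real Banach space of dimension at least 2. Then L_X is convex on [0, 1/2): for all t₁, t₂ ∈ [0, 1/2) and all λ ∈ [0, 1], L_X(λt₁ + (1−λ)t₂) ≤ λ·L_X(t₁) + (1−λ)·L_X(t₂). -/
namespace LXaux

variable {X : Type*} [NormedAddCommGroup X] [NormedSpace ℝ X]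

lemma sumpos {x y : X} (hxy : (x, y) ≠ (0, 0)) (hI : ‖x + y‖ = ‖x - y‖) :
    0 < ‖x + y‖ := by
  rcases eq_or_ne (x + y) 0 with h | h
  · exfalso
    have h2 : ‖x - y‖ = 0 := by rw [← hI, h, norm_zero]
    have hx : x = y := by
      have := sub_eq_zero.mp (norm_eq_zero.mp h2); exact this
    have hy : y = 0 := by
      have : y + y = 0 := by rw [← hx] at h ⊢; exact h
      have h2 : (2 : ℝ) • y = 0 := by rw [two_smul]; exact this
      simpa using (smul_eq_zero.mp h2).resolve_left (by norm_num)
    exact hxy (by simp [hx, hy])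
  · exact norm_pos_iff.mpr h

lemma norm_le {x y : X} (hI : ‖x + y‖ = ‖x - y‖) : ‖x‖ ≤ ‖x + y‖ ∧ ‖y‖ ≤ ‖x + y‖ := by
  constructor
  · have : (2 : ℝ) • x = (x + y) + (x - y) := by rw [two_smul]; abel
    have h2 : ‖(2:ℝ) • x‖ ≤ ‖x + y‖ + ‖x - y‖ := by rw [this]; exact norm_add_le _ _
    rw [norm_smul, ← hI] at h2
    simp only [Real.norm_ofNat] at h2
    linarith
  · have : (2 : ℝ) • y = (x + y) - (x - y) := by rw [two_smul]; abel
    have h2 : ‖(2:ℝ) • y‖ ≤ ‖x + y‖ + ‖x - y‖ := by rw [this]; exact norm_sub_le _ _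
    rw [norm_smul, ← hI] at h2
    simp only [Real.norm_ofNat] at h2
    linarith

lemma term_le {x y : X} (hI : ‖x + y‖ = ‖x - y‖) {t : ℝ} (ht0 : 0 ≤ t) (ht1 : t ≤ 1) :
    ‖t • x + (1 - t) • y‖ ≤ ‖x + y‖ := by
  obtain ⟨hx, hy⟩ := norm_le hI
  calc ‖t • x + (1 - t) • y‖ ≤ ‖t • x‖ + ‖(1 - t) • y‖ := norm_add_le _ _
    _ = t * ‖x‖ + (1 - t) * ‖y‖ := by
        rw [norm_smul, norm_smul, Real.norm_eq_abs, Real.norm_eq_abs,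
          abs_of_nonneg ht0, abs_of_nonneg (by linarith)]
    _ ≤ t * ‖x + y‖ + (1 - t) * ‖x + y‖ := by
        gcongr <;> linarith
    _ = ‖x + y‖ := by ring

lemma mem_set {x y : X} (hxy : (x, y) ≠ (0, 0)) (hI : ‖x + y‖ = ‖x - y‖) (t : ℝ) :
    (‖t • x + (1 - t) • y‖ ^ 2 + ‖(1 - t) • x + t • y‖ ^ 2) / ‖x + y‖ ^ 2 ∈
    {r : ℝ | ∃ x y : X, (x, y) ≠ (0, 0) ∧ ‖x + y‖ = ‖x - y‖ ∧
      r = (‖t • x + (1 - t) • y‖ ^ 2 + ‖(1 - t) • x + t • y‖ ^ 2) / ‖x + y‖ ^ 2} :=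
  ⟨x, y, hxy, hI, rfl⟩

lemma bdd (t : ℝ) (ht0 : 0 ≤ t) (ht1 : t ≤ 1) :
    ∀ r ∈ {r : ℝ | ∃ x y : X, (x, y) ≠ (0, 0) ∧ ‖x + y‖ = ‖x - y‖ ∧
      r = (‖t • x + (1 - t) • y‖ ^ 2 + ‖(1 - t) • x + t • y‖ ^ 2) / ‖x + y‖ ^ 2},
      r ≤ 2 := by
  rintro r ⟨x, y, hxy, hI, rfl⟩
  have hc := sumpos hxy hI
  have h1 : ‖t • x + (1 - t) • y‖ ≤ ‖x + y‖ := term_le hI ht0 ht1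
  have h2 : ‖(1 - t) • x + t • y‖ ≤ ‖x + y‖ := by
    have := term_le hI (by linarith : (0:ℝ) ≤ 1 - t) (by linarith : (1:ℝ) - t ≤ 1)
    simpa using this
  rw [div_le_iff₀ (by positivity)]
  nlinarith [norm_nonneg (t • x + (1 - t) • y), norm_nonneg ((1 - t) • x + t • y)]

end LXaux

theorem stmt_4 (X : Type*) [NormedAddCommGroup X] [NormedSpace ℝ X] [CompleteSpace X]
    (hdim : 2 ≤ Module.rank ℝ X) (t₁ t₂ l : ℝ)
    (h₁ : t₁ ∈ Set.Ico (0 : ℝ) (1 / 2)) (h₂ : t₂ ∈ Set.Ico (0 : ℝ) (1 / 2))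
    (hl : l ∈ Set.Icc (0 : ℝ) 1) :
    LX X (l * t₁ + (1 - l) * t₂) ≤ l * LX X t₁ + (1 - l) * LX X t₂ := by
  obtain ⟨ht10, ht11⟩ := h₁
  obtain ⟨ht20, ht21⟩ := h₂
  obtain ⟨hl0, hl1⟩ := hl
  -- nontriviality
  have hnt : Nontrivial X := by
    rw [← rank_pos_iff_nontrivial (R := ℝ)]
    exact lt_of_lt_of_le (by norm_num) hdim
  obtain ⟨x₀, hx₀⟩ := exists_ne (0 : X)
  have hxy₀ : ((x₀, (0 : X)) : X × X) ≠ (0, 0) := by simp [hx₀]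
  have hI₀ : ‖x₀ + (0 : X)‖ = ‖x₀ - 0‖ := by simp
  -- boundedness and nonemptiness of each set
  set S : ℝ → Set ℝ := fun t => {r : ℝ | ∃ x y : X, (x, y) ≠ (0, 0) ∧ ‖x + y‖ = ‖x - y‖ ∧
    r = (‖t • x + (1 - t) • y‖ ^ 2 + ‖(1 - t) • x + t • y‖ ^ 2) / ‖x + y‖ ^ 2} with hS
  have hLX : ∀ t, LX X t = sSup (S t) := fun t => rfl
  have hbdd : ∀ t, 0 ≤ t → t ≤ 1 → BddAbove (S t) := fun t h0 h1 =>
    ⟨2, fun r hr => LXaux.bdd t h0 h1 r hr⟩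
  have hnn : ∀ t, ∀ r ∈ S t, 0 ≤ r := by
    rintro t r ⟨x, y, hxy, hI, rfl⟩
    positivity
  have hsup_nn : ∀ t, 0 ≤ t → t ≤ 1 → 0 ≤ sSup (S t) := by
    intro t h0 h1
    have hmem := LXaux.mem_set hxy₀ hI₀ t
    exact le_trans (hnn t _ hmem) (le_csSup (hbdd t h0 h1) hmem)
  rw [hLX, hLX, hLX]
  apply Real.sSup_le
  · rintro r ⟨x, y, hxy, hI, rfl⟩
    set tl := l * t₁ + (1 - l) * t₂ with htl
    set a0 := ‖tl • x + (1 - tl) • y‖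
    set b0 := ‖(1 - tl) • x + tl • y‖
    set a1 := ‖t₁ • x + (1 - t₁) • y‖
    set b1 := ‖(1 - t₁) • x + t₁ • y‖
    set a2 := ‖t₂ • x + (1 - t₂) • y‖
    set b2 := ‖(1 - t₂) • x + t₂ • y‖
    have hc := LXaux.sumpos hxy hI
    have ha : a0 ≤ l * a1 + (1 - l) * a2 := by
      have hcomb : tl • x + (1 - tl) • y =
          l • (t₁ • x + (1 - t₁) • y) + (1 - l) • (t₂ • x + (1 - t₂) • y) := by
        simp only [smul_add, smul_smul]
        rw [htl]
        module
      calc a0 = ‖l • (t₁ • x + (1 - t₁) • y) + (1 - l) • (t₂ • x + (1 - t₂) • y)‖ := by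
            rw [← hcomb]
        _ ≤ ‖l • (t₁ • x + (1 - t₁) • y)‖ + ‖(1 - l) • (t₂ • x + (1 - t₂) • y)‖ :=
            norm_add_le _ _
        _ = l * a1 + (1 - l) * a2 := by
            rw [norm_smul, norm_smul, Real.norm_eq_abs, Real.norm_eq_abs,
              abs_of_nonneg hl0, abs_of_nonneg (by linarith)]
    have hb : b0 ≤ l * b1 + (1 - l) * b2 := by
      have hcomb : (1 - tl) • x + tl • y =
          l • ((1 - t₁) • x + t₁ • y) + (1 - l) • ((1 - t₂) • x + t₂ • y) := by
        simp only [smul_add, smul_smul]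
        rw [htl]
        module
      calc b0 = ‖l • ((1 - t₁) • x + t₁ • y) + (1 - l) • ((1 - t₂) • x + t₂ • y)‖ := by
            rw [← hcomb]
        _ ≤ ‖l • ((1 - t₁) • x + t₁ • y)‖ + ‖(1 - l) • ((1 - t₂) • x + t₂ • y)‖ :=
            norm_add_le _ _
        _ = l * b1 + (1 - l) * b2 := by
            rw [norm_smul, norm_smul, Real.norm_eq_abs, Real.norm_eq_abs,
              abs_of_nonneg hl0, abs_of_nonneg (by linarith)]
    have ha2 : a0 ^ 2 ≤ l * a1 ^ 2 + (1 - l) * a2 ^ 2 := by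
      nlinarith [norm_nonneg (tl • x + (1 - tl) • y), norm_nonneg (t₁ • x + (1 - t₁) • y),
        norm_nonneg (t₂ • x + (1 - t₂) • y), mul_nonneg hl0 (sub_nonneg.mpr hl1),
        sq_nonneg (a1 - a2)]
    have hb2 : b0 ^ 2 ≤ l * b1 ^ 2 + (1 - l) * b2 ^ 2 := by
      nlinarith [norm_nonneg ((1 - tl) • x + tl • y), norm_nonneg ((1 - t₁) • x + t₁ • y),
        norm_nonneg ((1 - t₂) • x + t₂ • y), mul_nonneg hl0 (sub_nonneg.mpr hl1),
        sq_nonneg (b1 - b2)]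
    have hmem1 : (a1 ^ 2 + b1 ^ 2) / ‖x + y‖ ^ 2 ∈ S t₁ := LXaux.mem_set hxy hI t₁
    have hmem2 : (a2 ^ 2 + b2 ^ 2) / ‖x + y‖ ^ 2 ∈ S t₂ := LXaux.mem_set hxy hI t₂
    have hle1 : (a1 ^ 2 + b1 ^ 2) / ‖x + y‖ ^ 2 ≤ sSup (S t₁) :=
      le_csSup (hbdd t₁ ht10 (by linarith)) hmem1
    have hle2 : (a2 ^ 2 + b2 ^ 2) / ‖x + y‖ ^ 2 ≤ sSup (S t₂) :=
      le_csSup (hbdd t₂ ht20 (by linarith)) hmem2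
    have step : (a0 ^ 2 + b0 ^ 2) / ‖x + y‖ ^ 2 ≤
        l * ((a1 ^ 2 + b1 ^ 2) / ‖x + y‖ ^ 2) + (1 - l) * ((a2 ^ 2 + b2 ^ 2) / ‖x + y‖ ^ 2) := by
      have hc2 : (0:ℝ) < ‖x + y‖ ^ 2 := pow_pos hc 2
      have heq : l * ((a1 ^ 2 + b1 ^ 2) / ‖x + y‖ ^ 2) + (1 - l) * ((a2 ^ 2 + b2 ^ 2) / ‖x + y‖ ^ 2)
          = (l * (a1 ^ 2 + b1 ^ 2) + (1 - l) * (a2 ^ 2 + b2 ^ 2)) / ‖x + y‖ ^ 2 := by ring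
      rw [heq]
      have hnum : a0 ^ 2 + b0 ^ 2 ≤ l * (a1 ^ 2 + b1 ^ 2) + (1 - l) * (a2 ^ 2 + b2 ^ 2) := by
        linarith
      exact div_le_div_of_nonneg_right hnum hc2.le
    calc (a0 ^ 2 + b0 ^ 2) / ‖x + y‖ ^ 2 ≤ _ := step
      _ ≤ l * sSup (S t₁) + (1 - l) * sSup (S t₂) := by
        gcongr
  · have h1 := hsup_nn t₁ ht10 (by linarith)
    have h2 := hsup_nn t₂ ht20 (by linarith)
    have := mul_nonneg hl0 h1
    have := mul_nonneg (sub_nonneg.mpr hl1) h2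
    linarith
end

section
/- Let X be a real Banach space of dimension at least 2. Then the function t ↦ L_X(t) is continuous on the interval [0, 1/2). -/
section aux

variable {X : Type*} [NormedAddCommGroup X] [NormedSpace ℝ X]

lemma LX_norm_pos {x y : X} (hxy : (x, y) ≠ (0, 0)) (ho : ‖x + y‖ = ‖x - y‖) :
    0 < ‖x + y‖ := by
  rcases (norm_nonneg (x + y)).lt_or_eq with h | h
  · exact h
  exfalso
  have h1 : x + y = 0 := norm_eq_zero.mp h.symm
  have h2 : x - y = 0 := norm_eq_zero.mp (by rw [← ho, ← h])
  apply hxy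
  have hx : (2 : ℝ) • x = 0 := by
    rw [two_smul, show x + x = (x + y) + (x - y) by abel, h1, h2, add_zero]
  have hy : (2 : ℝ) • y = 0 := by
    rw [two_smul, show y + y = (x + y) - (x - y) by abel, h1, h2, sub_zero]
  have hx0 : x = 0 := by
    rcases smul_eq_zero.mp hx with h | h
    · norm_num at h
    · exact h
  have hy0 : y = 0 := by
    rcases smul_eq_zero.mp hy with h | h
    · norm_num at h
    · exact h
  simp [hx0, hy0]

lemma LX_x_le {x y : X} (ho : ‖x + y‖ = ‖x - y‖) : ‖x‖ ≤ ‖x + y‖ := by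
  have h : (2 : ℝ) * ‖x‖ ≤ 2 * ‖x + y‖ := by
    calc (2 : ℝ) * ‖x‖ = ‖(x + y) + (x - y)‖ := by
          rw [show (x + y) + (x - y) = (2 : ℝ) • x by module, norm_smul]
          norm_num
      _ ≤ ‖x + y‖ + ‖x - y‖ := norm_add_le _ _
      _ = 2 * ‖x + y‖ := by rw [← ho]; ring
  linarith

lemma LX_y_le {x y : X} (ho : ‖x + y‖ = ‖x - y‖) : ‖y‖ ≤ ‖x + y‖ := by
  have h : (2 : ℝ) * ‖y‖ ≤ 2 * ‖x + y‖ := by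
    calc (2 : ℝ) * ‖y‖ = ‖(x + y) - (x - y)‖ := by
          rw [show (x + y) - (x - y) = (2 : ℝ) • y by module, norm_smul]
          norm_num
      _ ≤ ‖x + y‖ + ‖x - y‖ := norm_sub_le _ _
      _ = 2 * ‖x + y‖ := by rw [← ho]; ring
  linarith

/-- Bound on `‖t • x + (1 - t) • y‖` for `t ∈ [0, 1/2]`. -/
lemma LX_u_le {x y : X} (ho : ‖x + y‖ = ‖x - y‖) {t : ℝ} (ht0 : 0 ≤ t) (ht2 : t ≤ 1 / 2) :
    ‖t • x + (1 - t) • y‖ ≤ 3 / 2 * ‖x + y‖ := by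
  calc ‖t • x + (1 - t) • y‖ = ‖y + t • (x - y)‖ := by
        rw [show y + t • (x - y) = t • x + (1 - t) • y by module]
    _ ≤ ‖y‖ + ‖t • (x - y)‖ := norm_add_le _ _
    _ = ‖y‖ + |t| * ‖x - y‖ := by rw [norm_smul, Real.norm_eq_abs]
    _ ≤ ‖x + y‖ + (1 / 2) * ‖x + y‖ := by
        have h1 := LX_y_le ho
        have h2 : |t| ≤ 1 / 2 := abs_le.mpr ⟨by linarith, ht2⟩
        have h3 : ‖x - y‖ = ‖x + y‖ := ho.symm
        nlinarith [norm_nonneg (x + y)]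
    _ = 3 / 2 * ‖x + y‖ := by ring

lemma LX_u_lip {x y : X} (t s : ℝ) :
    ‖t • x + (1 - t) • y‖ ≤ ‖s • x + (1 - s) • y‖ + |t - s| * ‖x - y‖ := by
  have h : t • x + (1 - t) • y = (s • x + (1 - s) • y) + (t - s) • (x - y) := by module
  calc ‖t • x + (1 - t) • y‖ = ‖(s • x + (1 - s) • y) + (t - s) • (x - y)‖ := by rw [h]
    _ ≤ ‖s • x + (1 - s) • y‖ + ‖(t - s) • (x - y)‖ := norm_add_le _ _
    _ = ‖s • x + (1 - s) • y‖ + |t - s| * ‖x - y‖ := by rw [norm_smul, Real.norm_eq_abs]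

/-- Key pointwise Lipschitz estimate. -/
lemma LX_key {x y : X} (hxy : (x, y) ≠ (0, 0)) (ho : ‖x + y‖ = ‖x - y‖)
    {t s : ℝ} (ht0 : 0 ≤ t) (ht2 : t ≤ 1 / 2) (hs0 : 0 ≤ s) (hs2 : s ≤ 1 / 2) :
    (‖t • x + (1 - t) • y‖ ^ 2 + ‖(1 - t) • x + t • y‖ ^ 2) / ‖x + y‖ ^ 2 ≤
      (‖s • x + (1 - s) • y‖ ^ 2 + ‖(1 - s) • x + s • y‖ ^ 2) / ‖x + y‖ ^ 2 + 6 * |t - s| := by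
  have hn : 0 < ‖x + y‖ := LX_norm_pos hxy ho
  have hn2 : 0 < ‖x + y‖ ^ 2 := by positivity
  set n := ‖x + y‖ with hndef
  set d := |t - s| with hddef
  have hd0 : 0 ≤ d := abs_nonneg _
  -- first pair
  have ha1 : ‖t • x + (1 - t) • y‖ ≤ 3 / 2 * n := LX_u_le ho ht0 ht2
  have hb1 : ‖s • x + (1 - s) • y‖ ≤ 3 / 2 * n := LX_u_le ho hs0 hs2
  have hl1 : ‖t • x + (1 - t) • y‖ ≤ ‖s • x + (1 - s) • y‖ + d * n := by
    have := LX_u_lip (x := x) (y := y) t s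
    rw [← ho] at this
    exact this
  -- second pair: swap roles of x and y using 1 - t coefficients
  have hy' : ((y, x) : X × X) ≠ (0, 0) := by
    intro h
    apply hxy
    simp only [Prod.mk.injEq] at h ⊢
    exact ⟨h.2, h.1⟩
  have ho' : ‖y + x‖ = ‖y - x‖ := by
    rw [add_comm, ← norm_neg (y - x), neg_sub]; exact ho
  have hnn : ‖y + x‖ = n := by rw [add_comm]
  have ha2 : ‖(1 - t) • x + t • y‖ ≤ 3 / 2 * n := by
    have := LX_u_le (x := y) (y := x) ho' (t := t) ht0 ht2
    rw [hnn] at this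
    rw [add_comm]
    exact this
  have hb2 : ‖(1 - s) • x + s • y‖ ≤ 3 / 2 * n := by
    have := LX_u_le (x := y) (y := x) ho' (t := s) hs0 hs2
    rw [hnn] at this
    rw [add_comm]
    exact this
  have hl2 : ‖(1 - t) • x + t • y‖ ≤ ‖(1 - s) • x + s • y‖ + d * n := by
    have := LX_u_lip (x := y) (y := x) t s
    have hyx : ‖y - x‖ = n := by rw [← norm_neg (y - x), neg_sub, ← ho]
    rw [hyx] at this
    rw [add_comm (((1:ℝ) - t) • x), add_comm (((1:ℝ) - s) • x)]
    exact this
  -- square estimates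
  have hsq1 : ‖t • x + (1 - t) • y‖ ^ 2 ≤ ‖s • x + (1 - s) • y‖ ^ 2 + 3 * d * n ^ 2 := by
    nlinarith [norm_nonneg (t • x + (1 - t) • y), norm_nonneg (s • x + (1 - s) • y),
      mul_nonneg hd0 hn.le]
  have hsq2 : ‖(1 - t) • x + t • y‖ ^ 2 ≤ ‖(1 - s) • x + s • y‖ ^ 2 + 3 * d * n ^ 2 := by
    nlinarith [norm_nonneg ((1 - t) • x + t • y), norm_nonneg ((1 - s) • x + s • y),
      mul_nonneg hd0 hn.le]
  rw [div_le_iff₀ hn2, add_mul, div_mul_cancel₀ _ (ne_of_gt hn2)]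
  nlinarith [hsq1, hsq2]

lemma LX_mem_le {t : ℝ} (ht0 : 0 ≤ t) (ht2 : t ≤ 1 / 2) {r : ℝ}
    (hr : r ∈ {r : ℝ | ∃ x y : X, (x, y) ≠ (0, 0) ∧ ‖x + y‖ = ‖x - y‖ ∧
      r = (‖t • x + (1 - t) • y‖ ^ 2 + ‖(1 - t) • x + t • y‖ ^ 2) / ‖x + y‖ ^ 2}) :
    r ≤ 6 := by
  obtain ⟨x, y, hxy, ho, hre⟩ := hr
  have hn : 0 < ‖x + y‖ := LX_norm_pos hxy ho
  have hn2 : 0 < ‖x + y‖ ^ 2 := by positivity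
  have ha : ‖t • x + (1 - t) • y‖ ≤ 3 / 2 * ‖x + y‖ := LX_u_le ho ht0 ht2
  have ho' : ‖y + x‖ = ‖y - x‖ := by
    rw [add_comm, ← norm_neg (y - x), neg_sub]; exact ho
  have hb : ‖(1 - t) • x + t • y‖ ≤ 3 / 2 * ‖x + y‖ := by
    have := LX_u_le (x := y) (y := x) ho' (t := t) ht0 ht2
    rw [add_comm y x] at this
    rw [add_comm]
    exact this
  rw [hre, div_le_iff₀ hn2]
  nlinarith [norm_nonneg (t • x + (1 - t) • y), norm_nonneg ((1 - t) • x + t • y)]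

end aux

theorem stmt_5 (X : Type*) [NormedAddCommGroup X] [NormedSpace ℝ X] [CompleteSpace X]
    (hdim : 2 ≤ Module.rank ℝ X) :
    ContinuousOn (LX X) (Set.Ico (0 : ℝ) (1 / 2)) := by
  -- X is nontrivial
  have hnt : Nontrivial X := by
    rw [← rank_pos_iff_nontrivial (R := ℝ)]
    calc (0 : Cardinal) < 2 := by norm_num
      _ ≤ Module.rank ℝ X := hdim
  obtain ⟨v, hv⟩ := exists_ne (0 : X)
  -- the defining set
  set S : ℝ → Set ℝ := fun t => {r : ℝ | ∃ x y : X, (x, y) ≠ (0, 0) ∧ ‖x + y‖ = ‖x - y‖ ∧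
    r = (‖t • x + (1 - t) • y‖ ^ 2 + ‖(1 - t) • x + t • y‖ ^ 2) / ‖x + y‖ ^ 2} with hS
  have hmem : ∀ t : ℝ, ∀ x y : X, (x, y) ≠ (0, 0) → ‖x + y‖ = ‖x - y‖ →
      (‖t • x + (1 - t) • y‖ ^ 2 + ‖(1 - t) • x + t • y‖ ^ 2) / ‖x + y‖ ^ 2 ∈ S t := by
    intro t x y hxy ho
    exact ⟨x, y, hxy, ho, rfl⟩
  have h0v : ((0 : X), v) ≠ (0, 0) := by
    simp [hv]
  have h0o : ‖(0 : X) + v‖ = ‖(0 : X) - v‖ := by simp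
  have hne : ∀ t : ℝ, (S t).Nonempty := fun t => ⟨_, hmem t 0 v h0v h0o⟩
  have hbdd : ∀ t : ℝ, 0 ≤ t → t ≤ 1 / 2 → BddAbove (S t) := by
    intro t ht0 ht2
    exact ⟨6, fun r hr => LX_mem_le ht0 ht2 hr⟩
  -- one-sided Lipschitz bound
  have hlip : ∀ t s : ℝ, t ∈ Set.Ico (0 : ℝ) (1 / 2) → s ∈ Set.Ico (0 : ℝ) (1 / 2) →
      LX X t ≤ LX X s + 6 * |t - s| := by
    intro t s ht hs
    have ht0 := ht.1; have ht2 := ht.2.le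
    have hs0 := hs.1; have hs2 := hs.2.le
    apply csSup_le (hne t)
    rintro r ⟨x, y, hxy, ho, hre⟩
    have h1 : r ≤ (‖s • x + (1 - s) • y‖ ^ 2 + ‖(1 - s) • x + s • y‖ ^ 2) / ‖x + y‖ ^ 2
        + 6 * |t - s| := by
      rw [hre]
      exact LX_key hxy ho ht0 ht2 hs0 hs2
    have h2 : (‖s • x + (1 - s) • y‖ ^ 2 + ‖(1 - s) • x + s • y‖ ^ 2) / ‖x + y‖ ^ 2 ≤ LX X s :=
      le_csSup (hbdd s hs0 hs2) (hmem s x y hxy ho)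
    linarith
  -- Lipschitz on the set, hence continuous
  have hlw : LipschitzOnWith 6 (LX X) (Set.Ico (0 : ℝ) (1 / 2)) := by
    apply LipschitzOnWith.of_dist_le_mul
    intro t ht s hs
    rw [Real.dist_eq, Real.dist_eq]
    have h1 := hlip t s ht hs
    have h2 := hlip s t hs ht
    rw [abs_sub_comm s t] at h2
    push_cast
    rw [abs_le]
    constructor <;> linarith
  exact hlw.continuousOn
end

section
/- Let X be a real Hilbert space (a complete real inner product space) of dimension at least 2. Then the function t ↦ (L_X(t) − 1)/(1 − t) is non-increasing on [0, 1/2): for all 0 ≤ t₁ ≤ t₂ < 1/2, (L_X(t₂) − 1)/(1 − t₂) ≤ (L_X(t₁) − 1)/(1 − t₁). -/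
open scoped RealInnerProductSpace


lemma LX_eq_hilbert (X : Type*) [NormedAddCommGroup X] [InnerProductSpace ℝ X]
    [Nontrivial X] (t : ℝ) : LX X t = t ^ 2 + (1 - t) ^ 2 := by
  have hset : {r : ℝ | ∃ x y : X, (x, y) ≠ (0, 0) ∧ ‖x + y‖ = ‖x - y‖ ∧
      r = (‖t • x + (1 - t) • y‖ ^ 2 + ‖(1 - t) • x + t • y‖ ^ 2) / ‖x + y‖ ^ 2}
      = {t ^ 2 + (1 - t) ^ 2} := by
    ext r
    simp only [Set.mem_setOf_eq, Set.mem_singleton_iff]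
    constructor
    · rintro ⟨x, y, hne, hiso, rfl⟩
      have hinner : (inner ℝ x y : ℝ) = 0 := by
        have h1 : ‖x + y‖ ^ 2 = ‖x‖ ^ 2 + 2 * (inner ℝ x y : ℝ) + ‖y‖ ^ 2 := norm_add_sq_real x y
        have h2 : ‖x - y‖ ^ 2 = ‖x‖ ^ 2 - 2 * (inner ℝ x y : ℝ) + ‖y‖ ^ 2 := norm_sub_sq_real x y
        rw [hiso] at h1
        linarith
      have hxy : ‖x‖ ^ 2 + ‖y‖ ^ 2 ≠ 0 := by
        have : x ≠ 0 ∨ y ≠ 0 := by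
          by_contra h
          push_neg at h
          exact hne (by simp [h.1, h.2, Prod.ext_iff])
        have hx2 : (0:ℝ) ≤ ‖x‖ ^ 2 := sq_nonneg _
        have hy2 : (0:ℝ) ≤ ‖y‖ ^ 2 := sq_nonneg _
        rcases this with hx | hy
        · have h := norm_pos_iff.mpr hx
          nlinarith
        · have h := norm_pos_iff.mpr hy
          nlinarith
      have hsum : ‖x + y‖ ^ 2 = ‖x‖ ^ 2 + ‖y‖ ^ 2 := by
        rw [norm_add_sq_real, hinner]; ring
      have hA : ‖t • x + (1 - t) • y‖ ^ 2 = t ^ 2 * ‖x‖ ^ 2 + (1 - t) ^ 2 * ‖y‖ ^ 2 := by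
        rw [norm_add_sq_real, real_inner_smul_left, real_inner_smul_right, hinner,
          norm_smul, norm_smul, mul_pow, mul_pow]
        simp only [Real.norm_eq_abs, sq_abs]
        ring
      have hB : ‖(1 - t) • x + t • y‖ ^ 2 = (1 - t) ^ 2 * ‖x‖ ^ 2 + t ^ 2 * ‖y‖ ^ 2 := by
        rw [norm_add_sq_real, real_inner_smul_left, real_inner_smul_right, hinner,
          norm_smul, norm_smul, mul_pow, mul_pow]
        simp only [Real.norm_eq_abs, sq_abs]
        ring
      rw [hA, hB, hsum]
      field_simp
      ring
    · rintro rfl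
      obtain ⟨x, hx⟩ := exists_ne (0 : X)
      refine ⟨x, 0, ?_, by simp, ?_⟩
      · simp [Prod.ext_iff, hx]
      · have hx2 : ‖x‖ ^ 2 ≠ 0 := by
          have := norm_pos_iff.mpr hx; positivity
        simp only [smul_zero, add_zero, sub_zero, norm_smul, mul_pow,
          Real.norm_eq_abs, sq_abs]
        field_simp
  rw [LX, hset, csSup_singleton]

theorem stmt_6 (X : Type*) [NormedAddCommGroup X] [InnerProductSpace ℝ X] [CompleteSpace X]
    (hdim : 2 ≤ Module.rank ℝ X) (t₁ t₂ : ℝ)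
    (h₁ : 0 ≤ t₁) (h₁₂ : t₁ ≤ t₂) (h₂ : t₂ < 1 / 2) :
    (LX X t₂ - 1) / (1 - t₂) ≤ (LX X t₁ - 1) / (1 - t₁) := by
  have hnt : Nontrivial X := by
    rw [← rank_pos_iff_nontrivial (R := ℝ)]
    calc (0 : Cardinal) < 2 := by norm_num
      _ ≤ Module.rank ℝ X := hdim
  rw [LX_eq_hilbert, LX_eq_hilbert]
  have ht1 : (1 : ℝ) - t₁ ≠ 0 := by linarith
  have ht2 : (1 : ℝ) - t₂ ≠ 0 := by linarith
  have e1 : (t₁ ^ 2 + (1 - t₁) ^ 2 - 1) / (1 - t₁) = -2 * t₁ := by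
    field_simp; ring
  have e2 : (t₂ ^ 2 + (1 - t₂) ^ 2 - 1) / (1 - t₂) = -2 * t₂ := by
    field_simp; ring
  rw [e1, e2]
  linarith
end

section
/- Let X be a real Banach space of dimension at least 2. Then for every t ∈ [0, 1/2), L_X(t) = (1/2)·γ_X(1 − 2t). -/
open Pointwise


/-- Yang's function . -/
noncomputable def gammaX (X : Type*) [NormedAddCommGroup X] [NormedSpace ℝ X] (t : ℝ) : ℝ :=
  sSup {r : ℝ | ∃ x y : X, ‖x‖ = 1 ∧ ‖y‖ = 1 ∧
    r = (‖x + t • y‖ ^ 2 + ‖x - t • y‖ ^ 2) / 2}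


theorem aux_stmt7 (X : Type*) [NormedAddCommGroup X] [NormedSpace ℝ X]
    (t : ℝ) :
    sSup {r : ℝ | ∃ x y : X, (x, y) ≠ (0, 0) ∧ ‖x + y‖ = ‖x - y‖ ∧
      r = (‖t • x + (1 - t) • y‖ ^ 2 + ‖(1 - t) • x + t • y‖ ^ 2) / ‖x + y‖ ^ 2}
    = (1/2) * sSup {r : ℝ | ∃ x y : X, ‖x‖ = 1 ∧ ‖y‖ = 1 ∧
      r = (‖x + (1 - 2*t) • y‖ ^ 2 + ‖x - (1 - 2*t) • y‖ ^ 2) / 2} := by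
  set s : ℝ := 1 - 2*t with hs
  have hset : {r : ℝ | ∃ x y : X, (x, y) ≠ (0, 0) ∧ ‖x + y‖ = ‖x - y‖ ∧
      r = (‖t • x + (1 - t) • y‖ ^ 2 + ‖(1 - t) • x + t • y‖ ^ 2) / ‖x + y‖ ^ 2}
      = (1/2 : ℝ) • {r : ℝ | ∃ x y : X, ‖x‖ = 1 ∧ ‖y‖ = 1 ∧
      r = (‖x + s • y‖ ^ 2 + ‖x - s • y‖ ^ 2) / 2} := by
    ext r
    constructor
    · rintro ⟨x, y, hxy, hI, rfl⟩
      have hu : x + y ≠ 0 := by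
        intro h
        apply hxy
        have h2 : ‖x - y‖ = 0 := by rw [← hI, h, norm_zero]
        have h3 : x = y := by
          have := norm_eq_zero.mp h2; linear_combination (norm := module) this
        have hx : x = 0 := by
          have : x + x = 0 := by rw [h3] at h ⊢; exact h
          linear_combination (norm := module) (1/2 : ℝ) • this
        simp [Prod.ext_iff, hx, h3 ▸ hx]
      set c : ℝ := ‖x + y‖ with hc
      have hcpos : 0 < c := norm_pos_iff.mpr hu
      refine ⟨(‖(c⁻¹ • (x+y)) + s • (c⁻¹ • (x-y))‖ ^ 2 +
        ‖(c⁻¹ • (x+y)) - s • (c⁻¹ • (x-y))‖ ^ 2) / 2,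
        ⟨c⁻¹ • (x+y), c⁻¹ • (x-y), ?_, ?_, rfl⟩, ?_⟩
      · rw [norm_smul, Real.norm_eq_abs, abs_of_pos (inv_pos.mpr hcpos)]
        field_simp
        exact hc.symm
      · rw [norm_smul, Real.norm_eq_abs, abs_of_pos (inv_pos.mpr hcpos), ← hI]
        field_simp
      · have e1 : t • x + (1 - t) • y = (c/2) • ((c⁻¹ • (x+y)) - s • (c⁻¹ • (x-y))) := by
          have hc0 : c ≠ 0 := ne_of_gt hcpos
          rw [hs]
          match_scalars <;> (field_simp; try ring)
        have e2 : (1 - t) • x + t • y = (c/2) • ((c⁻¹ • (x+y)) + s • (c⁻¹ • (x-y))) := by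
          have hc0 : c ≠ 0 := ne_of_gt hcpos
          rw [hs]
          match_scalars <;> (field_simp; try ring)
        rw [e1, e2, norm_smul, norm_smul, Real.norm_eq_abs,
          abs_of_pos (by positivity : (0:ℝ) < c/2)]
        simp only [smul_eq_mul, mul_pow]
        field_simp
        ring
    · rintro ⟨r', ⟨a, b, ha, hb, rfl⟩, rfl⟩
      refine ⟨(1/2 : ℝ) • (a + b), (1/2 : ℝ) • (a - b), ?_, ?_, ?_⟩
      · intro h
        rw [Prod.ext_iff] at h
        obtain ⟨h1, h2⟩ := h
        have : a = 0 := by linear_combination (norm := module) h1 + h2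
        rw [this, norm_zero] at ha; norm_num at ha
      · have e1 : (1/2 : ℝ) • (a + b) + (1/2 : ℝ) • (a - b) = a := by module
        have e2 : (1/2 : ℝ) • (a + b) - (1/2 : ℝ) • (a - b) = b := by module
        rw [e1, e2, ha, hb]
      · have e1 : (1/2 : ℝ) • (a + b) + (1/2 : ℝ) • (a - b) = a := by module
        have e2 : t • ((1/2 : ℝ) • (a + b)) + (1 - t) • ((1/2 : ℝ) • (a - b))
            = (1/2 : ℝ) • (a - s • b) := by rw [hs]; module
        have e3 : (1 - t) • ((1/2 : ℝ) • (a + b)) + t • ((1/2 : ℝ) • (a - b))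
            = (1/2 : ℝ) • (a + s • b) := by rw [hs]; module
        rw [e1, e2, e3, ha, norm_smul, norm_smul, Real.norm_eq_abs,
          show |(1:ℝ)/2| = 1/2 by norm_num]
        norm_num
        ring
  rw [hset, show ((1:ℝ)/2) * sSup _ = (1/2 : ℝ) • sSup _ from rfl,
    ← Real.sSup_smul_of_nonneg (by norm_num)]

theorem stmt_7 (X : Type*) [NormedAddCommGroup X] [NormedSpace ℝ X] [CompleteSpace X]
    (hdim : 2 ≤ Module.rank ℝ X) (t : ℝ) (ht : t ∈ Set.Ico (0 : ℝ) (1 / 2)) :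
    LX X t = (1 / 2) * gammaX X (1 - 2 * t) := by
  unfold LX gammaX
  exact aux_stmt7 X t
end

section
/- Let 1 < p < ∞ and let X = ℓ^p be the Banach space of real sequences (x_i) with Σ|x_i|^p < ∞, normed by ‖x‖ = (Σ|x_i|^p)^{1/p}. Then for every t ∈ [0, 1/2), L_X(t) ≥ 2^{1 − 2/p}·((1−t)^p + t^p)^{2/p}. Moreover, if 2 ≤ p < ∞, then L_X(t) = 2^{1 − 2/p}·((1−t)^p + t^p)^{2/p}. -/
open Real Set


lemma R1 {x y q : ℝ} (hx : 0 ≤ x) (hy : 0 ≤ y) (hq : 1 ≤ q) :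
    (x + y) ^ q ≤ 2 ^ (q - 1) * (x ^ q + y ^ q) := by
  have h := NNReal.rpow_add_le_mul_rpow_add_rpow x.toNNReal y.toNNReal hq
  have := NNReal.coe_le_coe.2 h
  push_cast at this
  rwa [Real.coe_toNNReal _ hx, Real.coe_toNNReal _ hy] at this

lemma R2 {x y q : ℝ} (hx : 0 ≤ x) (hy : 0 ≤ y) (hq : 1 ≤ q) :
    x ^ q + y ^ q ≤ (x + y) ^ q := by
  have h := NNReal.add_rpow_le_rpow_add x.toNNReal y.toNNReal hq
  have := NNReal.coe_le_coe.2 h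
  push_cast at this
  rwa [Real.coe_toNNReal _ hx, Real.coe_toNNReal _ hy] at this

lemma sq_as_rpow {x : ℝ} (hx : 0 ≤ x) : x ^ (2:ℕ) = x ^ (2:ℝ) := by
  rw [← Real.rpow_natCast x 2]; norm_num

lemma clarkson_pt {p : ℝ} (hp2 : 2 ≤ p) (A B : ℝ) :
    |A+B|^p + |A-B|^p ≤ 2^(p-1) * (|A|^p + |B|^p) := by
  have habs : ∀ C : ℝ, |C| ^ p = (|C|^(2:ℝ))^(p/2) := by
    intro C
    rw [← Real.rpow_mul (abs_nonneg C)]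
    congr 1; field_simp
  have h1 : |A+B|^p + |A-B|^p ≤ (|A+B|^(2:ℝ) + |A-B|^(2:ℝ))^(p/2) := by
    rw [habs (A+B), habs (A-B)]
    exact R2 (by positivity) (by positivity) (by linarith)
  have e1 : |A+B|^(2:ℝ) + |A-B|^(2:ℝ) = |A|^(2:ℝ) + |B|^(2:ℝ) + (|A|^(2:ℝ) + |B|^(2:ℝ)) := by
    rw [← sq_as_rpow (abs_nonneg _), ← sq_as_rpow (abs_nonneg _), ← sq_as_rpow (abs_nonneg _),
      ← sq_as_rpow (abs_nonneg _)]
    simp only [sq_abs]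
    ring
  have h2 : (|A|^(2:ℝ) + |B|^(2:ℝ) + (|A|^(2:ℝ) + |B|^(2:ℝ)))^(p/2)
      ≤ 2^(p/2) * (|A|^(2:ℝ) + |B|^(2:ℝ))^(p/2) := by
    have : |A|^(2:ℝ) + |B|^(2:ℝ) + (|A|^(2:ℝ) + |B|^(2:ℝ)) = 2 * (|A|^(2:ℝ) + |B|^(2:ℝ)) := by ring
    rw [this, Real.mul_rpow (by norm_num) (by positivity)]
  have h3 : (|A|^(2:ℝ) + |B|^(2:ℝ))^(p/2) ≤ 2^(p/2-1) * (|A|^p + |B|^p) := by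
    have := R1 (x := |A|^(2:ℝ)) (y := |B|^(2:ℝ)) (by positivity) (by positivity)
      (by linarith : 1 ≤ p/2)
    rwa [← habs A, ← habs B] at this
  calc |A+B|^p + |A-B|^p ≤ (|A+B|^(2:ℝ) + |A-B|^(2:ℝ))^(p/2) := h1
    _ = (|A|^(2:ℝ) + |B|^(2:ℝ) + (|A|^(2:ℝ) + |B|^(2:ℝ)))^(p/2) := by rw [e1]
    _ ≤ 2^(p/2) * (|A|^(2:ℝ) + |B|^(2:ℝ))^(p/2) := h2
    _ ≤ 2^(p/2) * (2^(p/2-1) * (|A|^p + |B|^p)) := by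
        have : (0:ℝ) ≤ 2^(p/2) := by positivity
        nlinarith [h3]
    _ = 2^(p-1) * (|A|^p + |B|^p) := by
        rw [← mul_assoc, ← Real.rpow_add (by norm_num : (0:ℝ) < 2)]
        ring_nf

lemma PM {p A B : ℝ} (hp2 : 2 ≤ p) (hA : 0 ≤ A) (hB : 0 ≤ B) :
    A^(2:ℝ) + B^(2:ℝ) ≤ 2^(1-2/p) * (A^p + B^p)^(2/p) := by
  have hp0 : (0:ℝ) < p := by linarith
  have habs : ∀ C : ℝ, 0 ≤ C → C ^ p = (C^(2:ℝ))^(p/2) := by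
    intro C hC
    rw [← Real.rpow_mul hC]
    congr 1; field_simp
  have h1 : (A^(2:ℝ) + B^(2:ℝ))^(p/2) ≤ 2^(p/2-1) * (A^p + B^p) := by
    have := R1 (x := A^(2:ℝ)) (y := B^(2:ℝ)) (by positivity) (by positivity)
      (by linarith : 1 ≤ p/2)
    rwa [← habs A hA, ← habs B hB] at this
  have h2 := Real.rpow_le_rpow (by positivity) h1 (by positivity : (0:ℝ) ≤ 2/p)
  rwa [← Real.rpow_mul (by positivity), Real.mul_rpow (by positivity) (by positivity),
    ← Real.rpow_mul (by norm_num),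
    show (p/2) * (2/p) = 1 by field_simp,
    show (p/2-1) * (2/p) = 1 - 2/p by field_simp,
    Real.rpow_one] at h2


noncomputable def hBe (p r : ℝ) : ℝ := ((1+r)^(p-1) - (1-r)^(p-1)) * r^(1-p)
noncomputable def hAl (p r : ℝ) : ℝ := (1+r)^(p-1) + (1-r)^(p-1)

lemma hBe_anti {p : ℝ} (hp2 : 2 ≤ p) : AntitoneOn (hBe p) (Ioc 0 1) := by
  have hD : ∀ R ∈ interior (Ioc (0:ℝ) 1), HasDerivAt (hBe p)
      ((1 * (p-1) * (1+R)^(p-1-1) - (-1) * (p-1) * (1-R)^(p-1-1)) * R^(1-p)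
        + ((1+R)^(p-1) - (1-R)^(p-1)) * ((1-p) * R^(1-p-1))) R := by
    rw [interior_Ioc]
    rintro R ⟨hR0, hR1⟩
    have h1 : HasDerivAt (fun y : ℝ => (1+y)^(p-1)) (1 * (p-1) * (1+R)^(p-1-1)) R := by
      exact (HasDerivAt.const_add 1 (hasDerivAt_id R)).rpow_const (Or.inl (by positivity))
    have h2 : HasDerivAt (fun y : ℝ => (1-y)^(p-1)) ((-1) * (p-1) * (1-R)^(p-1-1)) R := by
      have := ((hasDerivAt_id R).const_sub 1).rpow_const
          (p := p - 1) (Or.inl (by simp only [id_eq]; intro h; linarith))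
      simpa using this
    have h3 : HasDerivAt (fun y : ℝ => y^(1-p)) ((1-p) * R^(1-p-1)) R :=
      Real.hasDerivAt_rpow_const (Or.inl hR0.ne')
    exact (h1.sub h2).mul h3
  refine antitoneOn_of_hasDerivWithinAt_nonpos (convex_Ioc 0 1) ?_
      (fun R hR => ((hD R hR).hasDerivWithinAt)) ?_
  · apply ContinuousOn.mul
    · apply ContinuousOn.sub
      · exact (continuousOn_const.add continuousOn_id).rpow_const
          (fun x _ => Or.inr (by linarith))
      · exact (continuousOn_const.sub continuousOn_id).rpow_const
          (fun x _ => Or.inr (by linarith))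
    · exact continuousOn_id.rpow_const (fun x hx => Or.inl (ne_of_gt hx.1))
  · rw [interior_Ioc]
    rintro R ⟨hR0, hR1⟩
    have hRp : (0:ℝ) < R ^ p := rpow_pos_of_pos hR0 p
    have e1 : R^(1-p) * R^p = R := by
      rw [← Real.rpow_add hR0]; norm_num
    have e2 : R^(1-p-1) * R^p = 1 := by
      rw [← Real.rpow_add hR0]; norm_num
    have e3 : (1+R)^(p-1) = (1+R)^(p-1-1) * (1+R) := by
      rw [← Real.rpow_add_one (by positivity : (1:ℝ)+R ≠ 0)]; ring_nf
    have e4 : (1-R)^(p-1) = (1-R)^(p-1-1) * (1-R) := by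
      rw [← Real.rpow_add_one (ne_of_gt (by linarith : (0:ℝ) < 1-R))]; ring_nf
    have key : ((1 * (p-1) * (1+R)^(p-1-1) - (-1) * (p-1) * (1-R)^(p-1-1)) * R^(1-p)
        + ((1+R)^(p-1) - (1-R)^(p-1)) * ((1-p) * R^(1-p-1))) * R^p
        = (p-1) * ((1-R)^(p-1-1) - (1+R)^(p-1-1)) := by
      rw [e3, e4]
      linear_combination ((p-1) * ((1+R)^(p-1-1) + (1-R)^(p-1-1))) * e1
        + ((1-p) * ((1+R)^(p-1-1)*(1+R) - (1-R)^(p-1-1)*(1-R))) * e2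
    have hle : (1-R)^(p-1-1) ≤ (1+R)^(p-1-1) :=
      Real.rpow_le_rpow (by linarith) (by linarith) (by linarith)
    have h5 : ((1 * (p-1) * (1+R)^(p-1-1) - (-1) * (p-1) * (1-R)^(p-1-1)) * R^(1-p)
        + ((1+R)^(p-1) - (1-R)^(p-1)) * ((1-p) * R^(1-p-1))) * R^p ≤ 0 := by
      rw [key]
      exact mul_nonpos_of_nonneg_of_nonpos (by linarith) (by linarith)
    by_contra hcon
    push_neg at hcon
    nlinarith [mul_pos hcon hRp]

lemma rpow_split {p x : ℝ} (hp : 1 ≤ p) (hx : 0 ≤ x) : x ^ p = x^(p-1) * x := by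
  rcases eq_or_lt_of_le hx with h | h
  · rw [← h, Real.zero_rpow (by linarith : p ≠ 0), mul_zero]
  · rw [← Real.rpow_add_one h.ne']; ring_nf

lemma AB_id {p r : ℝ} (hp2 : 2 ≤ p) (hr0 : 0 < r) (hr1 : r ≤ 1) :
    hAl p r + hBe p r * r^p = (1+r)^p + (1-r)^p := by
  have e1 : r^(1-p) * r^p = r := by rw [← Real.rpow_add hr0]; norm_num
  have e2 : (1+r)^p = (1+r)^(p-1) * (1+r) := rpow_split (by linarith) (by linarith)
  have e3 : (1-r)^p = (1-r)^(p-1) * (1-r) := rpow_split (by linarith) (by linarith)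
  rw [hAl, hBe, e2, e3]
  calc (1+r)^(p-1) + (1-r)^(p-1) + ((1+r)^(p-1) - (1-r)^(p-1)) * r^(1-p) * r^p
      = (1+r)^(p-1) + (1-r)^(p-1) + ((1+r)^(p-1) - (1-r)^(p-1)) * (r^(1-p) * r^p) := by ring
    _ = _ := by rw [e1]; ring

lemma hBe_mul_id {p R : ℝ} (hR : 0 < R) :
    hBe p R * R^(p-1) = (1+R)^(p-1) - (1-R)^(p-1) := by
  rw [hBe, mul_assoc, ← Real.rpow_add hR]
  norm_num

lemma hBe_one {p : ℝ} (hp2 : 2 ≤ p) : hBe p 1 = 2^(p-1) := by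
  rw [hBe, show (1:ℝ)+1 = 2 by norm_num, show (1:ℝ)-1 = 0 by norm_num,
    Real.zero_rpow (by linarith : p - 1 ≠ 0), Real.one_rpow, sub_zero, mul_one]

lemma phi_nonneg {p r : ℝ} (hp2 : 2 ≤ p) (hr : r ∈ Ioc (0:ℝ) 1) {R : ℝ}
    (hR : R ∈ Icc (0:ℝ) 1) : (1+R)^p + (1-R)^p ≤ hAl p r + hBe p r * R^p := by
  obtain ⟨hr0, hr1⟩ := hr
  set φ : ℝ → ℝ := fun R => hAl p r + hBe p r * R^p - (1+R)^p - (1-R)^p with hφ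
  have hp1 : (1:ℝ) ≤ p := by linarith
  have hDer : ∀ R : ℝ, HasDerivAt φ
      (hBe p r * (p * R^(p-1)) - 1 * p * (1+R)^(p-1) - (-1) * p * (1-R)^(p-1)) R := by
    intro R
    have d1 : HasDerivAt (fun y : ℝ => y ^ p) (p * R^(p-1)) R :=
      Real.hasDerivAt_rpow_const (Or.inr hp1)
    have d2 : HasDerivAt (fun y : ℝ => (1+y)^p) (1 * p * (1+R)^(p-1)) R :=
      (HasDerivAt.const_add 1 (hasDerivAt_id R)).rpow_const (Or.inr hp1)
    have d3 : HasDerivAt (fun y : ℝ => (1-y)^p) ((-1) * p * (1-R)^(p-1)) R := by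
      have := ((hasDerivAt_id R).const_sub 1).rpow_const (p := p) (Or.inr hp1)
      simpa using this
    exact ((d1.const_mul (hBe p r)).const_add (hAl p r)).sub d2 |>.sub d3
  have hCont : ∀ s : Set ℝ, ContinuousOn φ s :=
    fun s x _ => (hDer x).continuousAt.continuousWithinAt
  have hderiv_eq : ∀ R : ℝ, 0 < R →
      hBe p r * (p * R^(p-1)) - 1 * p * (1+R)^(p-1) - (-1) * p * (1-R)^(p-1)
        = p * R^(p-1) * (hBe p r - hBe p R) := by
    intro R hR0
    have h := hBe_mul_id (p := p) hR0
    linear_combination p * h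
  have hanti : AntitoneOn φ (Icc 0 r) := by
    apply antitoneOn_of_hasDerivWithinAt_nonpos (convex_Icc 0 r) (hCont _)
      (fun x hx => (hDer x).hasDerivWithinAt)
    rw [interior_Icc]
    rintro x ⟨hx0, hxr⟩
    rw [hderiv_eq x hx0]
    have hm := hBe_anti hp2 (a := x) (b := r) ⟨hx0, by linarith⟩ ⟨hr0, hr1⟩ hxr.le
    exact mul_nonpos_of_nonneg_of_nonpos
      (mul_nonneg (by linarith) (Real.rpow_nonneg hx0.le _)) (by linarith)
  have hmono : MonotoneOn φ (Icc r 1) := by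
    apply monotoneOn_of_hasDerivWithinAt_nonneg (convex_Icc r 1) (hCont _)
      (fun x hx => (hDer x).hasDerivWithinAt)
    rw [interior_Icc]
    rintro x ⟨hxr, hx1⟩
    rw [hderiv_eq x (by linarith)]
    have hm := hBe_anti hp2 (a := r) (b := x) ⟨hr0, hr1⟩ ⟨by linarith, by linarith⟩ hxr.le
    exact mul_nonneg (mul_nonneg (by linarith) (Real.rpow_nonneg (by linarith) _)) (by linarith)
  have hphir : φ r = 0 := by
    rw [hφ]; simp only
    have := AB_id hp2 hr0 hr1
    linarith
  have hfin : 0 ≤ φ R := by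
    rcases le_total R r with h | h
    · have := hanti (a := R) (b := r) ⟨hR.1, h⟩ ⟨hr0.le, le_rfl⟩ h
      linarith
    · have := hmono (a := r) (b := R) ⟨le_rfl, hr1⟩ ⟨h, hR.2⟩ h
      linarith
  rw [hφ] at hfin; simp only at hfin
  linarith

lemma hBe_ge {p r : ℝ} (hp2 : 2 ≤ p) (hr : r ∈ Ioc (0:ℝ) 1) : 2^(p-1) ≤ hBe p r := by
  have := hBe_anti hp2 (a := r) (b := 1) hr ⟨zero_lt_one, le_rfl⟩ hr.2
  rwa [hBe_one hp2] at this

lemma hanner_R {p r R : ℝ} (hp2 : 2 ≤ p) (hr : r ∈ Ioc (0:ℝ) 1) (hR : 0 ≤ R) :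
    (1+R)^p + |1-R|^p ≤ hAl p r + hBe p r * R^p := by
  rcases le_total R 1 with h1 | h1
  · rw [abs_of_nonneg (by linarith)]
    exact phi_nonneg hp2 hr ⟨hR, h1⟩
  · rw [abs_of_nonpos (by linarith)]
    have hcl := clarkson_pt hp2 R 1
    rw [abs_of_nonneg (by linarith : (0:ℝ) ≤ R + 1), abs_of_nonneg (by linarith : (0:ℝ) ≤ R - 1),
      abs_of_nonneg hR, abs_one, Real.one_rpow] at hcl
    have hb1 : 2^(p-1) ≤ hBe p r := hBe_ge hp2 hr
    have hab : 2^(p-1) * 2 ≤ hAl p r + hBe p r := by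
      have h := phi_nonneg hp2 hr (R := 1) ⟨zero_le_one, le_rfl⟩
      rw [Real.one_rpow, mul_one, show (1:ℝ)+1 = 2 by norm_num, show (1:ℝ)-1 = 0 by norm_num,
        Real.zero_rpow (by linarith : p ≠ 0)] at h
      have e : (2:ℝ)^p = 2^(p-1) * 2 := rpow_split (by linarith) (by norm_num)
      linarith
    have hRp : (1:ℝ) ≤ R^p := by
      calc (1:ℝ) = 1^p := (Real.one_rpow p).symm
        _ ≤ R^p := Real.rpow_le_rpow zero_le_one h1 (by linarith)
    have key : (R+1)^p + (R-1)^p ≤ hAl p r + hBe p r * R^p := by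
      nlinarith [mul_nonneg (by linarith : (0:ℝ) ≤ hBe p r - 2^(p-1))
        (by linarith : (0:ℝ) ≤ R^p - 1)]
    calc (1+R)^p + (-(1-R))^p = (R+1)^p + (R-1)^p := by
          rw [show (1:ℝ)+R = R+1 by ring, show -(1-R) = R-1 by ring]
      _ ≤ _ := key

lemma abs_pair_rpow (p A B : ℝ) :
    |A+B|^p + |A-B|^p = (|A|+|B|)^p + |(|A| - |B|)|^p := by
  rcases le_total 0 A with hA | hA <;> rcases le_total 0 B with hB | hB
  · rw [abs_of_nonneg hA, abs_of_nonneg hB, abs_of_nonneg (by linarith : 0 ≤ A + B)]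
  · rw [abs_of_nonneg hA, abs_of_nonpos hB,
      abs_of_nonneg (by linarith : 0 ≤ A - B),
      show A + -B = A - B by ring, show A - -B = A + B by ring]
    ring
  · rw [abs_of_nonpos hA, abs_of_nonneg hB,
      show A + B = -(-A - B) by ring, abs_neg,
      abs_of_nonpos (by linarith : A - B ≤ 0), show -(A-B) = -A + B by ring]
    ring
  · rw [abs_of_nonpos hA, abs_of_nonpos hB,
      abs_of_nonpos (by linarith : A + B ≤ 0), abs_sub_comm A B,
      show -A + -B = -(A+B) by ring, show -A - -B = B - A by ring]

lemma hanner_pt {p r : ℝ} (hp2 : 2 ≤ p) (hr : r ∈ Ioc (0:ℝ) 1) (A B : ℝ) :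
    |A+B|^p + |A-B|^p ≤ hAl p r * |A|^p + hBe p r * |B|^p := by
  rw [abs_pair_rpow]
  set a := |A| with ha
  set b := |B| with hb
  have ha0 : 0 ≤ a := abs_nonneg A
  have hb0 : 0 ≤ b := abs_nonneg B
  rcases eq_or_lt_of_le ha0 with h | h
  · rw [← h]
    simp only [zero_add, zero_sub, abs_neg, abs_of_nonneg hb0]
    rw [Real.zero_rpow (by linarith : p ≠ 0), mul_zero, zero_add]
    have hb1 : 2^(p-1) ≤ hBe p r := hBe_ge hp2 hr
    have h2 : (2:ℝ) ≤ 2^(p-1) := by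
      calc (2:ℝ) = 2^(1:ℝ) := (Real.rpow_one 2).symm
        _ ≤ 2^(p-1) := Real.rpow_le_rpow_of_exponent_le (by norm_num) (by linarith)
    nlinarith [mul_nonneg (by linarith : (0:ℝ) ≤ hBe p r - 2) (Real.rpow_nonneg hb0 p)]
  · set R := b / a with hR
    have hR0 : 0 ≤ R := by rw [hR]; positivity
    have hba : b = a * R := by rw [hR]; field_simp [h.ne']
    have e1 : (a+b)^p = a^p * (1+R)^p := by
      rw [show a + b = a * (1+R) by rw [hba]; ring, Real.mul_rpow h.le (by linarith)]
    have e2 : |a-b|^p = a^p * |1-R|^p := by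
      rw [show a - b = a * (1-R) by rw [hba]; ring, abs_mul, abs_of_pos h,
        Real.mul_rpow h.le (abs_nonneg _)]
    have e3 : b^p = a^p * R^p := by rw [hba, Real.mul_rpow h.le hR0]
    rw [e1, e2, e3]
    have hmain := hanner_R hp2 hr hR0
    have hap : (0:ℝ) ≤ a^p := Real.rpow_nonneg h.le p
    nlinarith [mul_le_mul_of_nonneg_left hmain hap]

section
variable {p : ℝ} [Fact (1 ≤ ENNReal.ofReal p)]

lemma lp_hasSum (hp0 : 0 < p) (f : lp (fun _ : ℕ => ℝ) (ENNReal.ofReal p)) :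
    HasSum (fun i => |f i| ^ p) (‖f‖ ^ p) := by
  have hq : (ENNReal.ofReal p).toReal = p := ENNReal.toReal_ofReal hp0.le
  have := lp.hasSum_norm (by rw [hq]; exact hp0) f
  rw [hq] at this
  simpa [Real.norm_eq_abs] using this

lemma hanner_lp (hp2 : 2 ≤ p) {s : ℝ} (hs : s ∈ Ioc (0:ℝ) 1)
    (f b : lp (fun _ : ℕ => ℝ) (ENNReal.ofReal p)) (hfb : ‖b‖ = ‖f‖) :
    ‖f + s•b‖^p + ‖f - s•b‖^p ≤ ((1+s)^p + (1-s)^p) * ‖f‖^p := by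
  have hp0 : (0:ℝ) < p := by linarith
  have h1 := lp_hasSum hp0 (f + s•b)
  have h2 := lp_hasSum hp0 (f - s•b)
  have hf := lp_hasSum hp0 f
  have hg := lp_hasSum hp0 (s•b)
  have hpt : ∀ i : ℕ, |(f + s•b) i|^p + |(f - s•b) i|^p
      ≤ hAl p s * |f i|^p + hBe p s * |(s•b) i|^p := by
    intro i
    have e1 : (f + s•b) i = f i + (s•b) i := by
      rw [lp.coeFn_add]; rfl
    have e2 : (f - s•b) i = f i - (s•b) i := by
      rw [lp.coeFn_sub]; rfl
    rw [e1, e2]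
    exact hanner_pt hp2 hs _ _
  have hsum := hasSum_le hpt (h1.add h2) ((hf.mul_left (hAl p s)).add (hg.mul_left (hBe p s)))
  have hgn : ‖s•b‖ = s * ‖f‖ := by
    rw [norm_smul, Real.norm_eq_abs, abs_of_pos hs.1, hfb]
  have hgp : ‖s•b‖^p = s^p * ‖f‖^p := by
    rw [hgn, Real.mul_rpow hs.1.le (norm_nonneg f)]
  rw [hgp] at hsum
  have := AB_id hp2 hs.1 hs.2
  nlinarith [Real.rpow_nonneg (norm_nonneg f) p, hsum]

end


lemma LX_bddAbove {X : Type*} [NormedAddCommGroup X] [NormedSpace ℝ X] {t : ℝ}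
    (ht0 : 0 ≤ t) (ht1 : t ≤ 1/2) {r : ℝ}
    (hr : r ∈ {r : ℝ | ∃ x y : X, (x, y) ≠ (0, 0) ∧ ‖x + y‖ = ‖x - y‖ ∧
      r = (‖t • x + (1 - t) • y‖ ^ 2 + ‖(1 - t) • x + t • y‖ ^ 2) / ‖x + y‖ ^ 2}) :
    r ≤ 2 * (1-t)^2 := by
  obtain ⟨x, y, hne, hxy, hreq⟩ := hr
  have hpos : 0 < ‖x + y‖ := by
    rcases (norm_nonneg (x + y)).eq_or_lt with h | h
    · exfalso
      have ha : x + y = 0 := norm_eq_zero.1 h.symm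
      have hb : x - y = 0 := norm_eq_zero.1 (hxy ▸ h.symm)
      have hx : x = 0 := by
        have h2 : (2:ℝ) • x = 0 := by
          have h3 : (x + y) + (x - y) = 0 := by rw [ha, hb, add_zero]
          rw [two_smul]
          linear_combination (norm := abel) h3
        simpa using (smul_eq_zero.1 h2).resolve_left (by norm_num)
      have hy : y = 0 := by
        have : (0:X) + y = 0 := hx ▸ ha
        simpa using this
      exact hne (by rw [hx, hy])
    · exact h
  have hid1 : t • x + (1 - t) • y = (1/2 : ℝ) • (x + y) - (1/2 - t) • (x - y) := by
    module
  have hid2 : (1 - t) • x + t • y = (1/2 : ℝ) • (x + y) + (1/2 - t) • (x - y) := by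
    module
  have hu : ‖t • x + (1 - t) • y‖ ≤ (1 - t) * ‖x + y‖ := by
    rw [hid1]
    refine (norm_sub_le _ _).trans ?_
    rw [norm_smul, norm_smul, ← hxy, Real.norm_eq_abs, Real.norm_eq_abs,
      abs_of_pos (by norm_num : (0:ℝ) < 1/2), abs_of_nonneg (by linarith : (0:ℝ) ≤ 1/2 - t)]
    nlinarith [hpos]
  have hv : ‖(1 - t) • x + t • y‖ ≤ (1 - t) * ‖x + y‖ := by
    rw [hid2]
    refine (norm_add_le _ _).trans ?_
    rw [norm_smul, norm_smul, ← hxy, Real.norm_eq_abs, Real.norm_eq_abs,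
      abs_of_pos (by norm_num : (0:ℝ) < 1/2), abs_of_nonneg (by linarith : (0:ℝ) ≤ 1/2 - t)]
    nlinarith [hpos]
  have hu2 := pow_le_pow_left₀ (norm_nonneg _) hu 2
  have hv2 := pow_le_pow_left₀ (norm_nonneg _) hv 2
  rw [hreq, div_le_iff₀ (by positivity : (0:ℝ) < ‖x + y‖^2)]
  rw [mul_pow] at hu2 hv2
  nlinarith [hu2, hv2]

section
variable {p : ℝ} [Fact (1 ≤ ENNReal.ofReal p)]
noncomputable def ee (p : ℝ) (c d : ℝ) : lp (fun _ : ℕ => ℝ) (ENNReal.ofReal p) :=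
  lp.single (ENNReal.ofReal p) 0 c + lp.single (ENNReal.ofReal p) 1 d

lemma ee_apply (c d : ℝ) (i : ℕ) :
    (ee p c d) i = if i = 0 then c else if i = 1 then d else 0 := by
  have h := congrFun (lp.coeFn_add
    (lp.single (ENNReal.ofReal p) 0 c : lp (fun _ : ℕ => ℝ) (ENNReal.ofReal p))
    (lp.single (ENNReal.ofReal p) 1 d)) i
  rw [ee, h, Pi.add_apply]
  rcases i with _ | i
  · rw [lp.single_apply_self, lp.single_apply_ne _ _ _ (by norm_num)]
    simp
  · rcases i with _ | i
    · rw [lp.single_apply_self, lp.single_apply_ne _ _ _ (by norm_num)]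
      simp
    · rw [lp.single_apply_ne _ _ _ (by omega), lp.single_apply_ne _ _ _ (by omega)]
      simp [Nat.succ_ne_zero]

lemma ee_norm (hp0 : 0 < p) (c d : ℝ) : ‖ee p c d‖ ^ p = |c|^p + |d|^p := by
  have h1 : HasSum (fun i => |(ee p c d) i| ^ p) (|c|^p + |d|^p) := by
    have he : (fun i => |(ee p c d) i| ^ p)
        = fun i => (if i = (0:ℕ) then |c|^p else 0) + (if i = (1:ℕ) then |d|^p else 0) := by
      funext i
      rw [ee_apply]
      rcases i with _ | i
      · simp
      · rcases i with _ | i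
        · simp
        · simp [Real.zero_rpow hp0.ne']
    rw [he]
    exact (hasSum_ite_eq 0 (|c|^p)).add (hasSum_ite_eq 1 (|d|^p))
  exact (lp_hasSum hp0 _).unique h1

lemma ee_smul (a c d : ℝ) : a • ee p c d = ee p (a*c) (a*d) := by
  rw [ee, ee, smul_add, ← lp.single_smul, ← lp.single_smul, smul_eq_mul, smul_eq_mul]

lemma ee_add (c d c' d' : ℝ) : ee p c d + ee p c' d' = ee p (c+c') (d+d') := by
  refine lp.ext (funext fun i => ?_)
  have h := congrFun (lp.coeFn_add (ee p c d) (ee p c' d')) i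
  rw [h, Pi.add_apply]
  rw [show (ee p c d) i = _ from ee_apply c d i, show (ee p c' d') i = _ from ee_apply c' d' i,
    show (ee p (c+c') (d+d')) i = _ from ee_apply (c+c') (d+d') i]
  split_ifs <;> norm_num

end

lemma pow_two_from_rpow {a S p : ℝ} (ha : 0 ≤ a) (hp0 : 0 < p) (h : a^p = S) :
    a^(2:ℕ) = S^(2/p) := by
  rw [← h, ← Real.rpow_mul ha, show p*(2/p) = 2 by field_simp, sq_as_rpow ha]

lemma rpow_left_inj {a b p : ℝ} (ha : 0 ≤ a) (hb : 0 ≤ b) (hp0 : 0 < p)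
    (h : a^p = b^p) : a = b := by
  rcases lt_trichotomy a b with hab | hab | hab
  · exact absurd h (ne_of_lt (Real.rpow_lt_rpow ha hab hp0))
  · exact hab
  · exact absurd h.symm (ne_of_lt (Real.rpow_lt_rpow hb hab hp0))

set_option maxHeartbeats 2000000 in
theorem stmt_9 (p : ℝ) [Fact (1 ≤ ENNReal.ofReal p)] (hp : 1 < p)
    (t : ℝ) (ht : t ∈ Set.Ico (0 : ℝ) (1 / 2)) :
    (2 : ℝ) ^ (1 - 2 / p) * ((1 - t) ^ p + t ^ p) ^ (2 / p) ≤
        LX (lp (fun _ : ℕ => ℝ) (ENNReal.ofReal p)) t ∧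
      (2 ≤ p →
        LX (lp (fun _ : ℕ => ℝ) (ENNReal.ofReal p)) t =
          (2 : ℝ) ^ (1 - 2 / p) * ((1 - t) ^ p + t ^ p) ^ (2 / p)) := by
  obtain ⟨ht0, ht1⟩ := ht
  have hp0 : (0:ℝ) < p := by linarith
  set W : ℝ := (1 - t) ^ p + t ^ p with hW
  have hWnn : 0 ≤ W := add_nonneg (Real.rpow_nonneg (by linarith) p) (Real.rpow_nonneg ht0 p)
  set V : ℝ := (2 : ℝ) ^ (1 - 2 / p) * W ^ (2 / p) with hV
  have hVnn : 0 ≤ V := mul_nonneg (Real.rpow_nonneg (by norm_num) _) (Real.rpow_nonneg hWnn _)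
  unfold LX
  set S := {r : ℝ | ∃ x y : lp (fun _ : ℕ => ℝ) (ENNReal.ofReal p), (x, y) ≠ (0, 0) ∧
      ‖x + y‖ = ‖x - y‖ ∧
      r = (‖t • x + (1 - t) • y‖ ^ 2 + ‖(1 - t) • x + t • y‖ ^ 2) / ‖x + y‖ ^ 2} with hS
  have hbdd : BddAbove S := ⟨2 * (1-t)^2, fun r hr => LX_bddAbove ht0 ht1.le hr⟩
  -- membership of V
  have hmem : V ∈ S := by
    refine ⟨ee p 1 0, ee p 0 1, ?_, ?_, ?_⟩
    · intro hcon
      have h1 : ee p 1 0 = 0 := (Prod.mk.injEq _ _ _ _ ▸ hcon : _ ∧ _).1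
      have h2 : (ee p 1 0) 0 = 1 := by rw [ee_apply]; norm_num
      rw [h1] at h2
      have : ((0 : lp (fun _ : ℕ => ℝ) (ENNReal.ofReal p))) 0 = 0 := rfl
      rw [this] at h2
      norm_num at h2
    · have e1 : ee p 1 0 + ee p 0 1 = ee p 1 1 := by rw [ee_add]; norm_num
      have e2 : ee p 1 0 - ee p 0 1 = ee p 1 (-1) := by
        rw [sub_eq_add_neg, ← neg_one_smul ℝ (ee p 0 1), ee_smul, ee_add]; norm_num
      rw [e1, e2]
      apply rpow_left_inj (norm_nonneg _) (norm_nonneg _) hp0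
      rw [ee_norm hp0, ee_norm hp0]
      norm_num
    · have e1 : ee p 1 0 + ee p 0 1 = ee p 1 1 := by rw [ee_add]; norm_num
      have e2 : t • ee p 1 0 + (1-t) • ee p 0 1 = ee p t (1-t) := by
        rw [ee_smul, ee_smul, ee_add]; norm_num
      have e3 : (1-t) • ee p 1 0 + t • ee p 0 1 = ee p (1-t) t := by
        rw [ee_smul, ee_smul, ee_add]; norm_num
      rw [e1, e2, e3]
      have n1 : ‖ee p t (1-t)‖^(2:ℕ) = W^(2/p) := by
        refine pow_two_from_rpow (norm_nonneg _) hp0 ?_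
        rw [ee_norm hp0, abs_of_nonneg ht0, abs_of_nonneg (by linarith : (0:ℝ) ≤ 1-t), hW]
        ring
      have n2 : ‖ee p (1-t) t‖^(2:ℕ) = W^(2/p) := by
        refine pow_two_from_rpow (norm_nonneg _) hp0 ?_
        rw [ee_norm hp0, abs_of_nonneg ht0, abs_of_nonneg (by linarith : (0:ℝ) ≤ 1-t), hW]
      have n3 : ‖ee p 1 1‖^(2:ℕ) = (2:ℝ)^(2/p) := by
        refine pow_two_from_rpow (norm_nonneg _) hp0 ?_
        rw [ee_norm hp0]; norm_num
      rw [n1, n2, n3, hV]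
      have h2p : (0:ℝ) < (2:ℝ)^(2/p) := Real.rpow_pos_of_pos (by norm_num) _
      rw [Real.rpow_sub (by norm_num : (0:ℝ) < 2), Real.rpow_one]
      field_simp
      ring
  have hlow : V ≤ sSup S := le_csSup hbdd hmem
  refine ⟨hlow, fun hp2 => le_antisymm (Real.sSup_le ?_ hVnn) hlow⟩
  -- upper bound
  rintro r ⟨x, y, hne, hxy, hreq⟩
  have hpos : 0 < ‖x + y‖ := by
    rcases (norm_nonneg (x + y)).eq_or_lt with h | h
    · exfalso
      have ha : x + y = 0 := norm_eq_zero.1 h.symm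
      have hb : x - y = 0 := norm_eq_zero.1 (hxy ▸ h.symm)
      have hx : x = 0 := by
        have h2 : (2:ℝ) • x = 0 := by
          have h3 : (x + y) + (x - y) = 0 := by rw [ha, hb, add_zero]
          rw [two_smul]
          linear_combination (norm := abel) h3
        simpa using (smul_eq_zero.1 h2).resolve_left (by norm_num)
      have hy : y = 0 := by
        have : (0: lp (fun _ : ℕ => ℝ) (ENNReal.ofReal p)) + y = 0 := hx ▸ ha
        simpa using this
      exact hne (by rw [hx, hy])
    · exact h
  set u := t • x + (1 - t) • y with hu
  set v := (1 - t) • x + t • y with hv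
  have hid1 : x + y - (1-2*t) • (x - y) = (2:ℝ) • u := by rw [hu]; module
  have hid2 : x + y + (1-2*t) • (x - y) = (2:ℝ) • v := by rw [hv]; module
  have hs : (1-2*t) ∈ Ioc (0:ℝ) 1 := ⟨by linarith, by linarith⟩
  have hH := hanner_lp hp2 hs (x + y) (x - y) hxy.symm
  rw [hid1, hid2] at hH
  have hn2 : ∀ z : lp (fun _ : ℕ => ℝ) (ENNReal.ofReal p), ‖(2:ℝ) • z‖ = 2 * ‖z‖ := by
    intro z
    rw [norm_smul, Real.norm_eq_abs, abs_of_pos (by norm_num : (0:ℝ) < 2)]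
  rw [hn2 u, hn2 v] at hH
  rw [Real.mul_rpow (by norm_num) (norm_nonneg v), Real.mul_rpow (by norm_num) (norm_nonneg u),
    show (1:ℝ) + (1-2*t) = 2*(1-t) by ring, show (1:ℝ) - (1-2*t) = 2*t by ring,
    Real.mul_rpow (by norm_num) (by linarith : (0:ℝ) ≤ 1-t),
    Real.mul_rpow (by norm_num) ht0] at hH
  have h2p : (0:ℝ) < (2:ℝ)^p := Real.rpow_pos_of_pos (by norm_num) _
  have hWb : ‖u‖^p + ‖v‖^p ≤ W * ‖x+y‖^p := by
    rw [hW]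
    nlinarith [hH]
  have hPM := PM hp2 (norm_nonneg u) (norm_nonneg v)
  have hmono : (‖u‖^p + ‖v‖^p)^(2/p) ≤ W^(2/p) * (‖x+y‖^(2:ℕ)) := by
    have h1 : (‖u‖^p + ‖v‖^p)^(2/p) ≤ (W * ‖x+y‖^p)^(2/p) :=
      Real.rpow_le_rpow (by positivity) hWb (by positivity)
    rwa [Real.mul_rpow hWnn (Real.rpow_nonneg (norm_nonneg _) _),
      ← Real.rpow_mul (norm_nonneg _), show p*(2/p) = 2 by field_simp,
      ← sq_as_rpow (norm_nonneg _)] at h1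
  rw [hreq, div_le_iff₀ (by positivity : (0:ℝ) < ‖x+y‖^2)]
  have hfin : ‖u‖^(2:ℕ) + ‖v‖^(2:ℕ) ≤ 2^(1-2/p) * (W^(2/p) * ‖x+y‖^(2:ℕ)) := by
    rw [sq_as_rpow (norm_nonneg u), sq_as_rpow (norm_nonneg v)]
    calc ‖u‖^(2:ℝ) + ‖v‖^(2:ℝ) ≤ 2^(1-2/p) * (‖u‖^p + ‖v‖^p)^(2/p) := hPM
      _ ≤ 2^(1-2/p) * (W^(2/p) * (‖x+y‖^(2:ℕ))) := by
          have : (0:ℝ) ≤ (2:ℝ)^(1-2/p) := Real.rpow_nonneg (by norm_num) _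
          nlinarith [hmono]
  calc ‖u‖^(2:ℕ) + ‖v‖^(2:ℕ) ≤ 2^(1-2/p) * (W^(2/p) * ‖x+y‖^(2:ℕ)) := hfin
    _ = V * ‖x+y‖^2 := by rw [hV]; ring
end

section
/- Let X be a real Banach space of dimension at least 2. Then for every t ∈ [0, 1/2), L_X(t) ≥ (4t² − 4t + 1)·C'_NJ(X). -/
/-- The modified von Neumann–Jordan constant. -/
noncomputable def CNJ' (X : Type*) [NormedAddCommGroup X] [NormedSpace ℝ X] : ℝ :=
  sSup {r : ℝ | ∃ x y : X, ‖x‖ = 1 ∧ ‖y‖ = 1 ∧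
    r = (‖x + y‖ ^ 2 + ‖x - y‖ ^ 2) / 4}

private lemma core_ineq (a b c P Q : ℝ) (ha : 0 ≤ a) (hb : 0 ≤ b) (hab : 2 ≤ a + b)
    (hc0 : 0 ≤ c) (hc1 : c ≤ 1) (hP1 : b - c ≤ P) (hP2 : c ≤ P)
    (hQ1 : a - c ≤ Q) (hQ2 : c ≤ Q) :
    (1 - c) ^ 2 * (a ^ 2 + b ^ 2) ≤ P ^ 2 + Q ^ 2 := by
  have hP : (b - c) ^ 2 ≤ P ^ 2 := by
    have h1 : 0 ≤ P - (b - c) := by linarith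
    have h2 : 0 ≤ P + (b - c) := by linarith
    nlinarith [mul_nonneg h1 h2]
  have hQ : (a - c) ^ 2 ≤ Q ^ 2 := by
    have h1 : 0 ≤ Q - (a - c) := by linarith
    have h2 : 0 ≤ Q + (a - c) := by linarith
    nlinarith [mul_nonneg h1 h2]
  have h1 : 0 ≤ 2 * (a ^ 2 + b ^ 2) - 2 * (a + b) := by
    nlinarith [sq_nonneg (a - b), sq_nonneg (a + b - 2)]
  nlinarith [mul_nonneg (mul_nonneg hc0 (by linarith : (0:ℝ) ≤ 1 - c)) h1,
    mul_nonneg (mul_nonneg hc0 hc0) (add_nonneg (sq_nonneg (a - 1)) (sq_nonneg (b - 1)))]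

theorem stmt_10 (X : Type*) [NormedAddCommGroup X] [NormedSpace ℝ X] [CompleteSpace X]
    (hdim : 2 ≤ Module.rank ℝ X) (t : ℝ) (ht : t ∈ Set.Ico (0 : ℝ) (1 / 2)) :
    (4 * t ^ 2 - 4 * t + 1) * CNJ' X ≤ LX X t := by
  obtain ⟨ht0, ht2⟩ := ht
  have hk : (0:ℝ) < 4 * t ^ 2 - 4 * t + 1 := by nlinarith
  -- the set defining LX
  set S1 : Set ℝ := {r : ℝ | ∃ x y : X, (x, y) ≠ (0, 0) ∧ ‖x + y‖ = ‖x - y‖ ∧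
    r = (‖t • x + (1 - t) • y‖ ^ 2 + ‖(1 - t) • x + t • y‖ ^ 2) / ‖x + y‖ ^ 2} with hS1
  set S2 : Set ℝ := {r : ℝ | ∃ x y : X, ‖x‖ = 1 ∧ ‖y‖ = 1 ∧
    r = (‖x + y‖ ^ 2 + ‖x - y‖ ^ 2) / 4} with hS2
  -- S1 is bounded above by 2
  have hbdd1 : BddAbove S1 := by
    refine ⟨2, ?_⟩
    rintro r ⟨x, y, hxy, hiso, rfl⟩
    have hxy0 : x + y ≠ 0 := by
      intro h
      have h2 : ‖x - y‖ = 0 := by rw [← hiso, h, norm_zero]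
      have h3 : x = y := by rwa [norm_eq_zero, sub_eq_zero] at h2
      have h2x : (2:ℝ) • x = 0 := by
        rw [two_smul]; nth_rewrite 2 [h3]; exact h
      have hx0 : x = 0 := (smul_eq_zero.mp h2x).resolve_left (by norm_num)
      exact hxy (by simp [Prod.ext_iff, hx0, ← h3])
    have hn : (0:ℝ) < ‖x + y‖ := norm_pos_iff.mpr hxy0
    have ht' : (0:ℝ) ≤ 1/2 - t := by linarith
    have e1 : t • x + (1 - t) • y = (1/2 : ℝ) • (x + y) + (1/2 - t) • (y - x) := by
      module
    have e2 : (1 - t) • x + t • y = (1/2 : ℝ) • (x + y) + (1/2 - t) • (x - y) := by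
      module
    have b1 : ‖t • x + (1 - t) • y‖ ≤ (1 - t) * ‖x + y‖ := by
      rw [e1]
      calc ‖(1/2 : ℝ) • (x + y) + (1/2 - t) • (y - x)‖
          ≤ ‖(1/2 : ℝ) • (x + y)‖ + ‖(1/2 - t) • (y - x)‖ := norm_add_le _ _
        _ = (1/2) * ‖x + y‖ + (1/2 - t) * ‖x - y‖ := by
            rw [norm_smul, norm_smul, norm_sub_rev y x, Real.norm_eq_abs, Real.norm_eq_abs,
              abs_of_nonneg (by norm_num : (0:ℝ) ≤ 1/2), abs_of_nonneg ht']
        _ = (1 - t) * ‖x + y‖ := by rw [← hiso]; ring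
    have b2 : ‖(1 - t) • x + t • y‖ ≤ (1 - t) * ‖x + y‖ := by
      rw [e2]
      calc ‖(1/2 : ℝ) • (x + y) + (1/2 - t) • (x - y)‖
          ≤ ‖(1/2 : ℝ) • (x + y)‖ + ‖(1/2 - t) • (x - y)‖ := norm_add_le _ _
        _ = (1/2) * ‖x + y‖ + (1/2 - t) * ‖x - y‖ := by
            rw [norm_smul, norm_smul, Real.norm_eq_abs, Real.norm_eq_abs,
              abs_of_nonneg (by norm_num : (0:ℝ) ≤ 1/2), abs_of_nonneg ht']
        _ = (1 - t) * ‖x + y‖ := by rw [← hiso]; ring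
    rw [div_le_iff₀ (by positivity)]
    have hP0 : (0:ℝ) ≤ ‖t • x + (1 - t) • y‖ := norm_nonneg _
    have hQ0 : (0:ℝ) ≤ ‖(1 - t) • x + t • y‖ := norm_nonneg _
    have hb1 : ‖t • x + (1 - t) • y‖ ^ 2 ≤ ((1 - t) * ‖x + y‖) ^ 2 :=
      pow_le_pow_left₀ hP0 b1 2
    have hb2 : ‖(1 - t) • x + t • y‖ ^ 2 ≤ ((1 - t) * ‖x + y‖) ^ 2 :=
      pow_le_pow_left₀ hQ0 b2 2
    nlinarith [mul_nonneg (mul_nonneg ht0 (by linarith : (0:ℝ) ≤ 2 - t)) (sq_nonneg ‖x + y‖)]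
  -- S2 is nonempty
  have hnt : Nontrivial X := by
    rw [← rank_pos_iff_nontrivial (R := ℝ)]
    calc (0 : Cardinal) < 2 := by norm_num
      _ ≤ Module.rank ℝ X := hdim
  obtain ⟨w, hw⟩ := exists_ne (0 : X)
  have hwn : (0:ℝ) < ‖w‖ := norm_pos_iff.mpr hw
  set u0 : X := ‖w‖⁻¹ • w with hu0
  have hu0n : ‖u0‖ = 1 := by
    rw [hu0, norm_smul, Real.norm_eq_abs, abs_of_nonneg (by positivity),
      inv_mul_cancel₀ (ne_of_gt hwn)]
  have hne2 : S2.Nonempty := ⟨(‖u0 + u0‖ ^ 2 + ‖u0 - u0‖ ^ 2) / 4, u0, u0, hu0n, hu0n, rfl⟩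
  -- main bound
  rw [show CNJ' X = sSup S2 from rfl, show LX X t = sSup S1 from rfl,
    ← le_div_iff₀' hk]
  apply csSup_le hne2
  rintro r ⟨u, v, hu, hv, rfl⟩
  rw [le_div_iff₀' hk]
  set x : X := u + v with hx
  set y : X := u - v with hy
  have hxyadd : x + y = u + u := by rw [hx, hy]; abel
  have hxysub : x - y = v + v := by rw [hx, hy]; abel
  have hnxy : ‖x + y‖ = 2 := by
    rw [hxyadd, ← two_smul ℝ u, norm_smul, hu]; norm_num
  have hnxy2 : ‖x - y‖ = 2 := by
    rw [hxysub, ← two_smul ℝ v, norm_smul, hv]; norm_num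
  have hmem : (‖t • x + (1 - t) • y‖ ^ 2 + ‖(1 - t) • x + t • y‖ ^ 2) / ‖x + y‖ ^ 2 ∈ S1 := by
    refine ⟨x, y, ?_, hnxy.trans hnxy2.symm, rfl⟩
    intro h
    simp only [Prod.mk.injEq] at h
    have hx0 : x + y = 0 := by rw [h.1, h.2, add_zero]
    rw [hx0, norm_zero] at hnxy
    norm_num at hnxy
  refine le_trans ?_ (le_csSup hbdd1 hmem)
  -- compute the two vectors
  have e1 : t • x + (1 - t) • y = u + (2*t - 1) • v := by rw [hx, hy]; module
  have e2 : (1 - t) • x + t • y = u + (1 - 2*t) • v := by rw [hx, hy]; module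
  set a : ℝ := ‖u + v‖ with hA
  set b : ℝ := ‖u - v‖ with hB
  set P : ℝ := ‖u + (2*t - 1) • v‖ with hPdef
  set Q : ℝ := ‖u + (1 - 2*t) • v‖ with hQdef
  have hab : 2 ≤ a + b := by
    have : ‖(u + v) + (u - v)‖ ≤ a + b := norm_add_le _ _
    have h2 : (u + v) + (u - v) = u + u := by abel
    rw [h2, ← two_smul ℝ u, norm_smul, hu] at this
    simpa using this
  have hP1 : b - 2*t ≤ P := by
    have e : u - v = (u + (2*t - 1) • v) - (2*t) • v := by module
    have : b ≤ P + ‖(2*t) • v‖ := by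
      rw [hB, e]; exact norm_sub_le _ _
    rw [norm_smul, Real.norm_eq_abs, abs_of_nonneg (by linarith), hv, mul_one] at this
    linarith
  have hP2 : 2*t ≤ P := by
    have e : u = (u + (2*t - 1) • v) - (2*t - 1) • v := by module
    have h : ‖u‖ ≤ P + ‖(2*t - 1) • v‖ := by
      conv_lhs => rw [e]
      exact norm_sub_le _ _
    rw [hu, norm_smul, Real.norm_eq_abs, abs_of_nonpos (by linarith), hv, mul_one] at h
    linarith
  have hQ1 : a - 2*t ≤ Q := by
    have e : u + v = (u + (1 - 2*t) • v) + (2*t) • v := by module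
    have : a ≤ Q + ‖(2*t) • v‖ := by
      rw [hA, e]; exact norm_add_le _ _
    rw [norm_smul, Real.norm_eq_abs, abs_of_nonneg (by linarith), hv, mul_one] at this
    linarith
  have hQ2 : 2*t ≤ Q := by
    have e : u = (u + (1 - 2*t) • v) - (1 - 2*t) • v := by module
    have h : ‖u‖ ≤ Q + ‖(1 - 2*t) • v‖ := by
      conv_lhs => rw [e]
      exact norm_sub_le _ _
    rw [hu, norm_smul, Real.norm_eq_abs, abs_of_nonneg (by linarith), hv, mul_one] at h
    linarith
  have hcore := core_ineq a b (2*t) P Q (norm_nonneg _) (norm_nonneg _) hab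
    (by linarith) (by linarith) hP1 hP2 hQ1 hQ2
  rw [e1, e2, hnxy, ← hPdef, ← hQdef]
  nlinarith [hcore]
end

section
/- Let X be a real Banach space of dimension at least 2 that is not uniformly non-square, i.e. for every ε > 0 there exist x, y ∈ X with ‖x‖ = ‖y‖ = 1, ‖x + y‖ > 2 − ε and ‖x − y‖ > 2 − ε. Then L_X(t) = 2t² − 4t + 2 for every t ∈ [0, 1/2). -/
theorem stmt_14 (X : Type*) [NormedAddCommGroup X] [NormedSpace ℝ X] [CompleteSpace X]
    (hdim : 2 ≤ Module.rank ℝ X)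
    (hns : ∀ ε > (0 : ℝ), ∃ x y : X, ‖x‖ = 1 ∧ ‖y‖ = 1 ∧
      2 - ε < ‖x + y‖ ∧ 2 - ε < ‖x - y‖) :
    ∀ t ∈ Set.Ico (0 : ℝ) (1 / 2), LX X t = 2 * t ^ 2 - 4 * t + 2 := by
  intro t ht
  obtain ⟨ht0, ht1⟩ := ht
  have ht2 : 2 * t < 1 := by linarith
  set S : Set ℝ := {r : ℝ | ∃ x y : X, (x, y) ≠ (0, 0) ∧ ‖x + y‖ = ‖x - y‖ ∧
    r = (‖t • x + (1 - t) • y‖ ^ 2 + ‖(1 - t) • x + t • y‖ ^ 2) / ‖x + y‖ ^ 2} with hSdef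
  have hLX : LX X t = sSup S := rfl
  -- Upper bound
  have hub : ∀ r ∈ S, r ≤ 2 * t ^ 2 - 4 * t + 2 := by
    rintro r ⟨x, y, hne, hI, rfl⟩
    have hxy : x + y ≠ 0 := by
      intro h
      have h1 : ‖x - y‖ = 0 := by rw [← hI, h, norm_zero]
      have h2 : x = y := by rwa [norm_eq_zero, sub_eq_zero] at h1
      have h3 : (2 : ℝ) • y = 0 := by rw [two_smul]; rw [h2] at h; exact h
      have hy : y = 0 := by
        rcases smul_eq_zero.mp h3 with h4 | h4
        · norm_num at h4
        · exact h4
      exact hne (by simp [h2, hy])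
    have hpos : 0 < ‖x + y‖ := norm_pos_iff.mpr hxy
    have e1 : t • x + (1 - t) • y = (1/2 : ℝ) • (x + y) - ((1 - 2*t)/2 : ℝ) • (x - y) := by
      module
    have e2 : (1 - t) • x + t • y = (1/2 : ℝ) • (x + y) + ((1 - 2*t)/2 : ℝ) • (x - y) := by
      module
    have ha : ‖t • x + (1 - t) • y‖ ≤ (1 - t) * ‖x + y‖ := by
      rw [e1]
      calc ‖(1/2 : ℝ) • (x + y) - ((1 - 2*t)/2 : ℝ) • (x - y)‖
          ≤ ‖(1/2 : ℝ) • (x + y)‖ + ‖((1 - 2*t)/2 : ℝ) • (x - y)‖ := norm_sub_le _ _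
        _ = (1/2) * ‖x + y‖ + ((1 - 2*t)/2) * ‖x - y‖ := by
            rw [norm_smul, norm_smul, Real.norm_eq_abs, Real.norm_eq_abs,
              abs_of_nonneg (by norm_num : (0:ℝ) ≤ 1/2),
              abs_of_nonneg (by linarith : (0:ℝ) ≤ (1 - 2*t)/2)]
        _ = (1 - t) * ‖x + y‖ := by rw [← hI]; ring
    have hb : ‖(1 - t) • x + t • y‖ ≤ (1 - t) * ‖x + y‖ := by
      rw [e2]
      calc ‖(1/2 : ℝ) • (x + y) + ((1 - 2*t)/2 : ℝ) • (x - y)‖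
          ≤ ‖(1/2 : ℝ) • (x + y)‖ + ‖((1 - 2*t)/2 : ℝ) • (x - y)‖ := norm_add_le _ _
        _ = (1/2) * ‖x + y‖ + ((1 - 2*t)/2) * ‖x - y‖ := by
            rw [norm_smul, norm_smul, Real.norm_eq_abs, Real.norm_eq_abs,
              abs_of_nonneg (by norm_num : (0:ℝ) ≤ 1/2),
              abs_of_nonneg (by linarith : (0:ℝ) ≤ (1 - 2*t)/2)]
        _ = (1 - t) * ‖x + y‖ := by rw [← hI]; ring
    rw [div_le_iff₀ (by positivity)]
    have ha0 : (0:ℝ) ≤ ‖t • x + (1 - t) • y‖ := norm_nonneg _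
    have hb0 : (0:ℝ) ≤ ‖(1 - t) • x + t • y‖ := norm_nonneg _
    nlinarith [sq_nonneg (‖x + y‖), mul_pos hpos hpos]
  -- Lower-bound elements
  have hmem : ∀ δ : ℝ, 0 < δ → δ ≤ 2 - 2*t →
      ∃ r ∈ S, 2 * t ^ 2 - 4 * t + 2 - 2 * δ ≤ r := by
    intro δ hδ0 hδ1
    obtain ⟨u, v, hu, hv, huv1, huv2⟩ := hns δ hδ0
    refine ⟨(‖t • (u + v) + (1 - t) • (u - v)‖ ^ 2 +
      ‖(1 - t) • (u + v) + t • (u - v)‖ ^ 2) / ‖(u + v) + (u - v)‖ ^ 2,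
      ⟨u + v, u - v, ?_, ?_, rfl⟩, ?_⟩
    · intro h
      have h1 : u + v = 0 := (Prod.mk.injEq _ _ _ _).mp h |>.1
      rw [h1, norm_zero] at huv1
      linarith
    · have e1 : (u + v) + (u - v) = (2:ℝ) • u := by module
      have e2 : (u + v) - (u - v) = (2:ℝ) • v := by module
      rw [e1, e2, norm_smul, norm_smul, hu, hv]
    · have e0 : (u + v) + (u - v) = (2:ℝ) • u := by module
      have hnorm : ‖(u + v) + (u - v)‖ = 2 := by
        rw [e0, norm_smul, hu]; simp
      have e1 : t • (u + v) + (1 - t) • (u - v) = (u - v) + (2*t) • v := by module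
      have e2 : (1 - t) • (u + v) + t • (u - v) = (u + v) - (2*t) • v := by module
      have ha : 2 - δ - 2*t ≤ ‖t • (u + v) + (1 - t) • (u - v)‖ := by
        rw [e1]
        have : ‖u - v‖ ≤ ‖(u - v) + (2*t) • v‖ + ‖(2*t) • v‖ := by
          calc ‖u - v‖ = ‖((u - v) + (2*t) • v) - (2*t) • v‖ := by congr 1; abel
            _ ≤ _ := norm_sub_le _ _
        have h2 : ‖(2*t) • v‖ = 2*t := by
          rw [norm_smul, hv, Real.norm_eq_abs, abs_of_nonneg (by linarith)]; ring
        rw [h2] at this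
        linarith
      have hb : 2 - δ - 2*t ≤ ‖(1 - t) • (u + v) + t • (u - v)‖ := by
        rw [e2]
        have : ‖u + v‖ ≤ ‖(u + v) - (2*t) • v‖ + ‖(2*t) • v‖ := by
          calc ‖u + v‖ = ‖((u + v) - (2*t) • v) + (2*t) • v‖ := by congr 1; abel
            _ ≤ _ := norm_add_le _ _
        have h2 : ‖(2*t) • v‖ = 2*t := by
          rw [norm_smul, hv, Real.norm_eq_abs, abs_of_nonneg (by linarith)]; ring
        rw [h2] at this
        linarith
      rw [hnorm]
      have hc0 : (0:ℝ) ≤ 2 - δ - 2*t := by linarith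
      rw [le_div_iff₀ (by norm_num)]
      nlinarith [sq_nonneg (2 - δ - 2*t)]
  have hδs : (0:ℝ) < 2 - 2*t := by linarith
  obtain ⟨r0, hr0, _⟩ := hmem (2 - 2*t) hδs le_rfl
  have hSne : S.Nonempty := ⟨r0, hr0⟩
  have hbdd : BddAbove S := ⟨2 * t ^ 2 - 4 * t + 2, hub⟩
  rw [hLX]
  apply le_antisymm (csSup_le hSne hub)
  apply le_of_forall_pos_le_add
  intro ε hε
  have hδ0 : 0 < min (ε/2) (2 - 2*t) := lt_min (by linarith) hδs
  obtain ⟨r, hrS, hr⟩ := hmem (min (ε/2) (2 - 2*t)) hδ0 (min_le_right _ _)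
  have h1 : r ≤ sSup S := le_csSup hbdd hrS
  have h2 : min (ε/2) (2 - 2*t) ≤ ε/2 := min_le_left _ _
  linarith
end

section
/- Let X be a finite-dimensional real Banach space of dimension at least 2, and suppose L_X(t₀) = 2t₀² − 4t₀ + 2 for some t₀ ∈ [0, 1/2). Then X is not uniformly non-square: for every δ ∈ (0, 1) there exist x, y ∈ X with ‖x‖ = ‖y‖ = 1 such that ‖x + y‖ > 2(1 − δ) and ‖x − y‖ > 2(1 − δ). -/
set_option maxHeartbeats 1000000 in
theorem stmt_16 (X : Type*) [NormedAddCommGroup X] [NormedSpace ℝ X]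
    [FiniteDimensional ℝ X] (hdim : 2 ≤ Module.finrank ℝ X)
    (t₀ : ℝ) (ht₀ : t₀ ∈ Set.Ico (0 : ℝ) (1 / 2))
    (hL : LX X t₀ = 2 * t₀ ^ 2 - 4 * t₀ + 2) :
    ∀ δ ∈ Set.Ioo (0 : ℝ) 1, ∃ x y : X, ‖x‖ = 1 ∧ ‖y‖ = 1 ∧
      2 * (1 - δ) < ‖x + y‖ ∧ 2 * (1 - δ) < ‖x - y‖ := by
  obtain ⟨ht0, ht1⟩ := ht₀
  intro δ hδ
  obtain ⟨hδ0, hδ1⟩ := hδ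
  have hnt : Nontrivial X := by
    have h : 0 < Module.finrank ℝ X := by omega
    exact Module.nontrivial_of_finrank_pos h
  obtain ⟨v, hv⟩ := exists_ne (0 : X)
  have hd : (0:ℝ) < 1/2 - t₀ := by linarith
  set ε : ℝ := δ * (1/2 - t₀) / 2 with hεdef
  have hε : 0 < ε := by positivity
  set S : Set ℝ := {r : ℝ | ∃ x y : X, (x, y) ≠ (0, 0) ∧ ‖x + y‖ = ‖x - y‖ ∧
    r = (‖t₀ • x + (1 - t₀) • y‖ ^ 2 + ‖(1 - t₀) • x + t₀ • y‖ ^ 2) / ‖x + y‖ ^ 2} with hSdef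
  have hL' : sSup S = 2 * t₀ ^ 2 - 4 * t₀ + 2 := hL
  have hne : S.Nonempty := by
    refine ⟨(‖t₀ • v + (1 - t₀) • (0:X)‖ ^ 2 + ‖(1 - t₀) • v + t₀ • (0:X)‖ ^ 2) / ‖v + (0:X)‖ ^ 2,
      v, 0, ?_, by simp, rfl⟩
    simp [hv]
  obtain ⟨r, hrS, hr⟩ := exists_lt_of_lt_csSup hne
    (show 2 * t₀ ^ 2 - 4 * t₀ + 2 - ε < sSup S by rw [hL']; linarith)
  obtain ⟨x, y, hxy0, hiso, hreq⟩ := hrS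
  have hxy : x + y ≠ 0 := by
    intro h
    have hxy2 : x - y = 0 := by
      have h0 : ‖x - y‖ = 0 := by rw [← hiso, h, norm_zero]
      exact norm_eq_zero.mp h0
    have hx0 : x = 0 := by
      have h2 : (2:ℝ) • x = (x + y) + (x - y) := by module
      rw [h, hxy2, add_zero] at h2
      simpa using h2
    have hy0 : y = 0 := by
      have h2 : (2:ℝ) • y = (x + y) - (x - y) := by module
      rw [h, hxy2, sub_zero] at h2
      simpa using h2
    exact hxy0 (by simp [hx0, hy0])
  set N : ℝ := ‖x + y‖ with hNdef
  have hN : 0 < N := norm_pos_iff.mpr hxy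
  set A : ℝ := ‖t₀ • x + (1 - t₀) • y‖ with hAdef
  set B : ℝ := ‖(1 - t₀) • x + t₀ • y‖ with hBdef
  have hA0 : 0 ≤ A := norm_nonneg _
  have hB0 : 0 ≤ B := norm_nonneg _
  have hAle : A ≤ (1 - t₀) * N := by
    have hdecomp : t₀ • x + (1 - t₀) • y = (1/2 : ℝ) • (x + y) + (1/2 - t₀) • (y - x) := by
      module
    calc A = ‖(1/2 : ℝ) • (x + y) + (1/2 - t₀) • (y - x)‖ := by rw [hAdef, hdecomp]
    _ ≤ ‖(1/2 : ℝ) • (x + y)‖ + ‖(1/2 - t₀) • (y - x)‖ := norm_add_le _ _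
    _ = (1/2) * N + (1/2 - t₀) * N := by
        rw [norm_smul, norm_smul, Real.norm_eq_abs, Real.norm_eq_abs,
          abs_of_nonneg (by norm_num : (0:ℝ) ≤ 1/2), abs_of_nonneg hd.le,
          norm_sub_rev y x, ← hiso]
    _ = (1 - t₀) * N := by ring
  have hBle : B ≤ (1 - t₀) * N := by
    have hdecomp : (1 - t₀) • x + t₀ • y = (1/2 : ℝ) • (x + y) + (1/2 - t₀) • (x - y) := by
      module
    calc B = ‖(1/2 : ℝ) • (x + y) + (1/2 - t₀) • (x - y)‖ := by rw [hBdef, hdecomp]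
    _ ≤ ‖(1/2 : ℝ) • (x + y)‖ + ‖(1/2 - t₀) • (x - y)‖ := norm_add_le _ _
    _ = (1/2) * N + (1/2 - t₀) * N := by
        rw [norm_smul, norm_smul, Real.norm_eq_abs, Real.norm_eq_abs,
          abs_of_nonneg (by norm_num : (0:ℝ) ≤ 1/2), abs_of_nonneg hd.le, ← hiso]
    _ = (1 - t₀) * N := by ring
  have hr' : 2 * t₀ ^ 2 - 4 * t₀ + 2 - ε < (A ^ 2 + B ^ 2) / N ^ 2 := hreq ▸ hr
  have hsum : (2 * t₀ ^ 2 - 4 * t₀ + 2 - ε) * N ^ 2 < A ^ 2 + B ^ 2 :=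
    (lt_div_iff₀ (by positivity)).mp hr'
  have hA2 : ((1 - t₀) ^ 2 - ε) * N ^ 2 < A ^ 2 := by nlinarith [hBle, hB0, hN]
  have hB2 : ((1 - t₀) ^ 2 - ε) * N ^ 2 < B ^ 2 := by nlinarith [hAle, hA0, hN]
  have hq : 0 < ε * (1 - 2 * t₀) * (N * N) :=
    mul_pos (mul_pos hε (by linarith : (0:ℝ) < 1 - 2 * t₀)) (mul_pos hN hN)
  have hAlow : ((1 - t₀) - 2 * ε) * N < A := by
    by_contra hcon
    push_neg at hcon
    have h1 : A * A ≤ ((1 - t₀) * N) * (((1 - t₀) - 2 * ε) * N) :=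
      mul_le_mul hAle hcon hA0 (mul_nonneg (by linarith) hN.le)
    nlinarith [hA2, h1, hq]
  have hBlow : ((1 - t₀) - 2 * ε) * N < B := by
    by_contra hcon
    push_neg at hcon
    have h1 : B * B ≤ ((1 - t₀) * N) * (((1 - t₀) - 2 * ε) * N) :=
      mul_le_mul hBle hcon hB0 (mul_nonneg (by linarith) hN.le)
    nlinarith [hB2, h1, hq]
  set a : X := N⁻¹ • (x + y) with hadef
  set b : X := N⁻¹ • (x - y) with hbdef
  have ha : ‖a‖ = 1 := by
    rw [hadef, norm_smul, Real.norm_eq_abs, abs_inv, abs_of_pos hN]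
    field_simp
    exact hNdef.symm
  have hb : ‖b‖ = 1 := by
    rw [hbdef, norm_smul, Real.norm_eq_abs, abs_inv, abs_of_pos hN, ← hiso]
    field_simp
  have key1 : ‖(1/2 : ℝ) • a - (1/2 - t₀) • b‖ = A / N := by
    have hid : (1/2 : ℝ) • a - (1/2 - t₀) • b = N⁻¹ • (t₀ • x + (1 - t₀) • y) := by
      rw [hadef, hbdef]; module
    rw [hid, norm_smul, Real.norm_eq_abs, abs_inv, abs_of_pos hN, ← hAdef]
    ring
  have key2 : ‖(1/2 : ℝ) • a + (1/2 - t₀) • b‖ = B / N := by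
    have hid : (1/2 : ℝ) • a + (1/2 - t₀) • b = N⁻¹ • ((1 - t₀) • x + t₀ • y) := by
      rw [hadef, hbdef]; module
    rw [hid, norm_smul, Real.norm_eq_abs, abs_inv, abs_of_pos hN, ← hBdef]
    ring
  have tri1 : A / N ≤ (1/2 - t₀) * ‖a - b‖ + t₀ := by
    have hid : (1/2 : ℝ) • a - (1/2 - t₀) • b = (1/2 - t₀) • (a - b) + t₀ • a := by module
    calc A / N = ‖(1/2 - t₀) • (a - b) + t₀ • a‖ := by rw [← hid, key1]
    _ ≤ ‖(1/2 - t₀) • (a - b)‖ + ‖t₀ • a‖ := norm_add_le _ _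
    _ = (1/2 - t₀) * ‖a - b‖ + t₀ := by
        rw [norm_smul, norm_smul, Real.norm_eq_abs, Real.norm_eq_abs,
          abs_of_nonneg hd.le, abs_of_nonneg ht0, ha, mul_one]
  have tri2 : B / N ≤ (1/2 - t₀) * ‖a + b‖ + t₀ := by
    have hid : (1/2 : ℝ) • a + (1/2 - t₀) • b = (1/2 - t₀) • (a + b) + t₀ • a := by module
    calc B / N = ‖(1/2 - t₀) • (a + b) + t₀ • a‖ := by rw [← hid, key2]
    _ ≤ ‖(1/2 - t₀) • (a + b)‖ + ‖t₀ • a‖ := norm_add_le _ _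
    _ = (1/2 - t₀) * ‖a + b‖ + t₀ := by
        rw [norm_smul, norm_smul, Real.norm_eq_abs, Real.norm_eq_abs,
          abs_of_nonneg hd.le, abs_of_nonneg ht0, ha, mul_one]
  have hAdiv : (1 - t₀) - 2 * ε < A / N := by
    rw [lt_div_iff₀ hN]; nlinarith [hAlow]
  have hBdiv : (1 - t₀) - 2 * ε < B / N := by
    rw [lt_div_iff₀ hN]; nlinarith [hBlow]
  refine ⟨a, b, ha, hb, ?_, ?_⟩
  · -- 2(1-δ) < ‖a + b‖
    have h1 : (1 - t₀) - 2 * ε < (1/2 - t₀) * ‖a + b‖ + t₀ := lt_of_lt_of_le hBdiv tri2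
    have h2 : 2 * ε = δ * (1/2 - t₀) := by rw [hεdef]; ring
    nlinarith [h1, hd, hδ0, hδ1]
  · have h1 : (1 - t₀) - 2 * ε < (1/2 - t₀) * ‖a - b‖ + t₀ := lt_of_lt_of_le hAdiv tri1
    nlinarith [h1, hd, hδ0, hδ1]
end
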